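/- arXiv:1411.3894 — 9 statements merged into one kernel-verified Lean document; each statement's English description precedes it below -/
import Mathlib

section
/- Let V be a finite-dimensional real inner product space, let W be a group of linear isometries of V, let Q be a W-invariant additive subgroup of V, let P∨ be an additive subgroup of V such that ⟨p, q⟩ ∈ ℤ for all p ∈ P∨ and q ∈ Q, and let ρ∨ ∈ V satisfy ρ∨ − w·ρ∨ ∈ P∨ for all w ∈ W. Form the semidirect product Q ⋊ W, where W acts on the additive group Q by restriction of its action on V (this is the group of affine maps a ↦ w·a + q with w ∈ W, q ∈ Q). Then the map θ̂ : Q ⋊ W → ℂˣ sending (q, w) to exp(2πi⟨q, ρ∨⟩) is a group homomorphism; equivalently, for all w_1, w_2 ∈ W and q_1, q_2 ∈ Q one has exp(2πi⟨w_1·q_2 + q_1, ρ∨⟩) = exp(2πi⟨q_1, ρ∨⟩)·exp(2πi⟨q_2, ρ∨⟩). -/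
/-- With `W`, `Q`, `P∨`, `ρ∨` as in Statement 3 (Q `W`-invariant, `P∨`
ℤ-dual to `Q`, `ρ∨` admissible), the map `θ̂ : Q ⋊ W → ℂˣ`, `(q, w) ↦ exp(2πi⟪q, ρ∨⟫)`
is a group homomorphism; equivalently, for all `w₁, w₂ ∈ W` and `q₁, q₂ ∈ Q`,
`exp(2πi⟪w₁ q₂ + q₁, ρ∨⟫) = exp(2πi⟪q₁, ρ∨⟫) · exp(2πi⟪q₂, ρ∨⟫)`. -/
theorem stmt_4 {V : Type*} [NormedAddCommGroup V] [InnerProductSpace ℝ V]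
    [FiniteDimensional ℝ V]
    (W : Subgroup (V ≃ₗᵢ[ℝ] V)) (Q Pv : AddSubgroup V)
    (hQ : ∀ w : W, ∀ q ∈ Q, (w : V ≃ₗᵢ[ℝ] V) q ∈ Q)
    (hdual : ∀ p ∈ Pv, ∀ q ∈ Q, ∃ m : ℤ, (inner ℝ p q : ℝ) = m)
    (ρv : V) (hρv : ∀ w : W, ρv - (w : V ≃ₗᵢ[ℝ] V) ρv ∈ Pv) :
    ∀ w₁ w₂ : W, ∀ q₁ ∈ Q, ∀ q₂ ∈ Q,
      Complex.exp (2 * Real.pi * Complex.I *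
          ((inner ℝ ((w₁ : V ≃ₗᵢ[ℝ] V) q₂ + q₁) ρv : ℝ) : ℂ)) =
        Complex.exp (2 * Real.pi * Complex.I * ((inner ℝ q₁ ρv : ℝ) : ℂ)) *
          Complex.exp (2 * Real.pi * Complex.I * ((inner ℝ q₂ ρv : ℝ) : ℂ)) := by
  intro w₁ w₂ q₁ hq₁ q₂ hq₂
  obtain ⟨m, hm⟩ := hdual _ (hρv w₁⁻¹) q₂ hq₂
  have key : (inner ℝ ((w₁ : V ≃ₗᵢ[ℝ] V) q₂) ρv : ℝ) = inner ℝ q₂ ρv - m := by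
    have h1 : (inner ℝ ((w₁ : V ≃ₗᵢ[ℝ] V) q₂) ρv : ℝ)
        = inner ℝ q₂ (((w₁⁻¹ : W) : V ≃ₗᵢ[ℝ] V) ρv) := by
      rw [← ((w₁⁻¹ : W) : V ≃ₗᵢ[ℝ] V).inner_map_map ((w₁ : V ≃ₗᵢ[ℝ] V) q₂) ρv]
      congr 1
      simp
    rw [inner_sub_left] at hm
    have e1 : (inner ℝ q₂ (((w₁⁻¹ : W) : V ≃ₗᵢ[ℝ] V) ρv) : ℝ)
        = inner ℝ (((w₁⁻¹ : W) : V ≃ₗᵢ[ℝ] V) ρv) q₂ := real_inner_comm _ _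
    have e2 : (inner ℝ q₂ ρv : ℝ) = inner ℝ ρv q₂ := real_inner_comm _ _
    rw [h1]
    linarith [hm, e1, e2]
  have hsplit : (2 : ℂ) * Real.pi * Complex.I *
      ((inner ℝ ((w₁ : V ≃ₗᵢ[ℝ] V) q₂ + q₁) ρv : ℝ) : ℂ)
      = 2 * Real.pi * Complex.I * ((inner ℝ q₁ ρv : ℝ) : ℂ)
        + 2 * Real.pi * Complex.I * ((inner ℝ q₂ ρv : ℝ) : ℂ)
        + (-m : ℤ) * (2 * Real.pi * Complex.I) := by
    rw [inner_add_left, key]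
    push_cast
    ring
  rw [hsplit, Complex.exp_add, Complex.exp_int_mul_two_pi_mul_I, mul_one, Complex.exp_add]
end

section
/- Let V be a finite-dimensional real inner product space, W a finite group of linear isometries of V, and σ : W → {+1, −1} a group homomorphism; for b ∈ V define the orbit function φ^σ_b : V → ℂ by φ^σ_b(a) = Σ_{w ∈ W} σ(w)·exp(2πi⟨w·b, a⟩). Let Q∨ be a W-invariant additive subgroup of V, let P be an additive subgroup of V with ⟨λ, q⟩ ∈ ℤ for all λ ∈ P and q ∈ Q∨, and let ρ ∈ V satisfy ρ − w·ρ ∈ P for all w ∈ W. Then for every b ∈ ρ + P, every w' ∈ W, every q ∈ Q∨ and every a ∈ V, φ^σ_b(w'·a + q) = σ(w')·exp(2πi⟨ρ, q⟩)·φ^σ_b(a). -/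
/-- The orbit function `φ^σ_b(a) = Σ_{w ∈ W} σ(w) · exp(2πi⟪w b, a⟫)` attached to a
finite group `W` of linear isometries and a sign homomorphism `σ : W → {±1}`. -/
noncomputable def orbitFn {V : Type*} [NormedAddCommGroup V] [InnerProductSpace ℝ V]
    (W : Subgroup (V ≃ₗᵢ[ℝ] V)) [Fintype W] (σ : W →* ℤˣ) (b a : V) : ℂ :=
  ∑ w : W, ((σ w : ℤ) : ℂ) *
    Complex.exp (2 * Real.pi * Complex.I * ((inner ℝ ((w : V ≃ₗᵢ[ℝ] V) b) a : ℝ) : ℂ))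

/-- With `Q∨` a `W`-invariant additive subgroup, `P` an additive subgroup
ℤ-dual to `Q∨`, and `ρ` an admissible dual shift, for every `b ∈ ρ + P`, `w' ∈ W`,
`q ∈ Q∨` and `a ∈ V`:
`φ^σ_b(w'·a + q) = σ(w') · exp(2πi⟪ρ, q⟫) · φ^σ_b(a)`. -/
theorem stmt_7 {V : Type*} [NormedAddCommGroup V] [InnerProductSpace ℝ V]
    [FiniteDimensional ℝ V]
    (W : Subgroup (V ≃ₗᵢ[ℝ] V)) [Fintype W] (σ : W →* ℤˣ)
    (Qv P : AddSubgroup V)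
    (hQv : ∀ w : W, ∀ q ∈ Qv, (w : V ≃ₗᵢ[ℝ] V) q ∈ Qv)
    (hdual : ∀ l ∈ P, ∀ q ∈ Qv, ∃ m : ℤ, (inner ℝ l q : ℝ) = m)
    (ρ : V) (hρ : ∀ w : W, ρ - (w : V ≃ₗᵢ[ℝ] V) ρ ∈ P)
    (b : V) (hb : b - ρ ∈ P) (w' : W) (q : V) (hq : q ∈ Qv) (a : V) :
    orbitFn W σ b ((w' : V ≃ₗᵢ[ℝ] V) a + q) =
      ((σ w' : ℤ) : ℂ) * Complex.exp (2 * Real.pi * Complex.I * ((inner ℝ ρ q : ℝ) : ℂ)) *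
        orbitFn W σ b a := by
  have key : ∀ w : W,
      Complex.exp (2 * Real.pi * Complex.I * ((inner ℝ ((w : V ≃ₗᵢ[ℝ] V) b) q : ℝ) : ℂ)) =
      Complex.exp (2 * Real.pi * Complex.I * ((inner ℝ ρ q : ℝ) : ℂ)) := by
    intro w
    have hq' : ((w⁻¹ : W) : V ≃ₗᵢ[ℝ] V) q ∈ Qv := hQv w⁻¹ q hq
    obtain ⟨m₁, hm₁⟩ := hdual _ hb _ hq'
    obtain ⟨m₂, hm₂⟩ := hdual _ (hρ w) q hq
    have hw : (w : V ≃ₗᵢ[ℝ] V) (((w⁻¹ : W) : V ≃ₗᵢ[ℝ] V) q) = q := by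
      have : ((w : V ≃ₗᵢ[ℝ] V) * ((w⁻¹ : W) : V ≃ₗᵢ[ℝ] V)) q = q := by
        rw [← Subgroup.coe_mul, mul_inv_cancel]; rfl
      exact this
    have h1 : (inner ℝ ((w : V ≃ₗᵢ[ℝ] V) b - (w : V ≃ₗᵢ[ℝ] V) ρ) q : ℝ) = m₁ := by
      rw [← hm₁, ← map_sub]
      conv_lhs => rw [← hw]
      exact (w : V ≃ₗᵢ[ℝ] V).inner_map_map _ _
    have hsplit : (inner ℝ ((w : V ≃ₗᵢ[ℝ] V) b) q : ℝ)
        = (m₁ - m₂ : ℤ) + inner ℝ ρ q := by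
      rw [inner_sub_left] at h1 hm₂
      push_cast
      linarith
    rw [hsplit]
    push_cast
    rw [mul_add, Complex.exp_add]
    have : Complex.exp (2 * Real.pi * Complex.I * ((m₁ - m₂ : ℤ) : ℂ)) = 1 := by
      rw [show (2 : ℂ) * Real.pi * Complex.I * ((m₁ - m₂ : ℤ) : ℂ)
          = ((m₁ - m₂ : ℤ) : ℂ) * (2 * Real.pi * Complex.I) by ring]
      exact Complex.exp_int_mul_two_pi_mul_I _
    push_cast at this
    rw [this, one_mul]
  unfold orbitFn
  rw [Finset.mul_sum]
  rw [← Equiv.sum_comp (Equiv.mulLeft w') (fun w : W => ((σ w : ℤ) : ℂ) *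
    Complex.exp (2 * Real.pi * Complex.I * ((inner ℝ ((w : V ≃ₗᵢ[ℝ] V) b)
      ((w' : V ≃ₗᵢ[ℝ] V) a + q) : ℝ) : ℂ)))]
  apply Finset.sum_congr rfl
  intro w _
  have hco : (((w' * w : W) : V ≃ₗᵢ[ℝ] V) b) = (w' : V ≃ₗᵢ[ℝ] V) ((w : V ≃ₗᵢ[ℝ] V) b) := rfl
  have hin : (inner ℝ (((w' * w : W) : V ≃ₗᵢ[ℝ] V) b) ((w' : V ≃ₗᵢ[ℝ] V) a + q) : ℝ)
      = inner ℝ ((w : V ≃ₗᵢ[ℝ] V) b) a + inner ℝ (((w' * w : W) : V ≃ₗᵢ[ℝ] V) b) q := by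
    rw [inner_add_right, hco, (w' : V ≃ₗᵢ[ℝ] V).inner_map_map]
  simp only [Equiv.coe_mulLeft]
  rw [hin]
  push_cast
  rw [mul_add, Complex.exp_add]
  have key' := key (w' * w)
  rw [Subgroup.coe_mul] at key'
  rw [key']
  have hσ : ((σ (w' * w) : ℤ) : ℂ) = ((σ w' : ℤ) : ℂ) * ((σ w : ℤ) : ℂ) := by
    rw [map_mul]; push_cast; ring
  rw [hσ]
  ring
end

section
/- Let V be a finite-dimensional real inner product space, W a finite group of linear isometries of V, and σ : W → {+1, −1} a group homomorphism; for b ∈ V define the orbit function φ^σ_b : V → ℂ by φ^σ_b(a) = Σ_{w ∈ W} σ(w)·exp(2πi⟨w·b, a⟩). Let Q∨ be a W-invariant additive subgroup of V, let P be an additive subgroup of V with ⟨λ, q⟩ ∈ ℤ for all λ ∈ P and q ∈ Q∨, and let ρ ∈ V satisfy ρ − w·ρ ∈ P for all w ∈ W. If b ∈ ρ + P and a ∈ V is such that there exist r ∈ W and q ∈ Q∨ with r·a + q = a and σ(r)·exp(2πi⟨ρ, q⟩) = −1, then φ^σ_b(a) = 0. -/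
/-- With `Q∨` a `W`-invariant additive subgroup, `P` ℤ-dual to `Q∨` and
`ρ` an admissible dual shift, if `b ∈ ρ + P` and `a` is fixed by some affine map
`x ↦ r·x + q` (`r ∈ W`, `q ∈ Q∨`) with `σ(r)·exp(2πi⟪ρ, q⟫) = -1`, then
`φ^σ_b(a) = 0`. -/
theorem stmt_8 {V : Type*} [NormedAddCommGroup V] [InnerProductSpace ℝ V]
    [FiniteDimensional ℝ V]
    (W : Subgroup (V ≃ₗᵢ[ℝ] V)) [Fintype W] (σ : W →* ℤˣ)
    (Qv P : AddSubgroup V)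
    (hQv : ∀ w : W, ∀ q ∈ Qv, (w : V ≃ₗᵢ[ℝ] V) q ∈ Qv)
    (hdual : ∀ l ∈ P, ∀ q ∈ Qv, ∃ m : ℤ, (inner ℝ l q : ℝ) = m)
    (ρ : V) (hρ : ∀ w : W, ρ - (w : V ≃ₗᵢ[ℝ] V) ρ ∈ P)
    (b : V) (hb : b - ρ ∈ P) (a : V)
    (ha : ∃ r : W, ∃ q ∈ Qv, (r : V ≃ₗᵢ[ℝ] V) a + q = a ∧
      ((σ r : ℤ) : ℂ) * Complex.exp (2 * Real.pi * Complex.I * ((inner ℝ ρ q : ℝ) : ℂ))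
        = -1) :
    orbitFn W σ b a = 0 := by
  obtain ⟨r, q, hq, hfix, hsign⟩ := ha
  -- Step 1: for every u : W, ⟪u b, q⟫ - ⟪ρ, q⟫ is an integer.
  have hint : ∀ u : W, ∃ m : ℤ,
      (inner ℝ ((u : V ≃ₗᵢ[ℝ] V) b) q : ℝ) = (inner ℝ ρ q : ℝ) + m := by
    intro u
    obtain ⟨m₁, hm₁⟩ := hdual (b - ρ) hb (((u⁻¹ : W) : V ≃ₗᵢ[ℝ] V) q)
      (hQv u⁻¹ q hq)
    obtain ⟨m₂, hm₂⟩ := hdual (ρ - (u : V ≃ₗᵢ[ℝ] V) ρ) (hρ u) q hq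
    refine ⟨m₁ - m₂, ?_⟩
    have hco : ((u⁻¹ : W) : V ≃ₗᵢ[ℝ] V) = ((u : V ≃ₗᵢ[ℝ] V)).symm := rfl
    have h1 : (inner ℝ ((u : V ≃ₗᵢ[ℝ] V) (b - ρ)) q : ℝ) = m₁ := by
      rw [← hm₁, hco]
      rw [← ((u : V ≃ₗᵢ[ℝ] V)).inner_map_map (b - ρ) (((u : V ≃ₗᵢ[ℝ] V)).symm q)]
      simp
    have hexp : (inner ℝ ((u : V ≃ₗᵢ[ℝ] V) b) q : ℝ)
        = (inner ℝ ((u : V ≃ₗᵢ[ℝ] V) (b - ρ)) q : ℝ)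
          - (inner ℝ (ρ - (u : V ≃ₗᵢ[ℝ] V) ρ) q : ℝ) + (inner ℝ ρ q : ℝ) := by
      simp only [map_sub, inner_sub_left]
      ring
    rw [hexp, h1, hm₂]
    push_cast
    ring
  -- Step 2: exp factor equality
  have hexpeq : ∀ u : W,
      Complex.exp (2 * Real.pi * Complex.I * ((inner ℝ ((u : V ≃ₗᵢ[ℝ] V) b) q : ℝ) : ℂ))
        = Complex.exp (2 * Real.pi * Complex.I * ((inner ℝ ρ q : ℝ) : ℂ)) := by
    intro u
    obtain ⟨m, hm⟩ := hint u
    rw [hm]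
    push_cast
    rw [mul_add, Complex.exp_add]
    have : Complex.exp (2 * Real.pi * Complex.I * (m : ℂ)) = 1 := by
      rw [show (2 : ℂ) * Real.pi * Complex.I * (m : ℂ)
          = (m : ℂ) * (2 * Real.pi * Complex.I) by ring]
      exact Complex.exp_int_mul_two_pi_mul_I m
    rw [this, mul_one]
  -- Step 3: key identity
  have key : orbitFn W σ b a
      = (((σ r : ℤ) : ℂ) * Complex.exp (2 * Real.pi * Complex.I * ((inner ℝ ρ q : ℝ) : ℂ)))
        * orbitFn W σ b a := by
    unfold orbitFn
    rw [Finset.mul_sum]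
    refine Fintype.sum_equiv (Equiv.mulLeft r) _ _ ?_
    intro w
    simp only [Equiv.coe_mulLeft]
    have hσ : ((σ (r * w) : ℤ) : ℂ) = ((σ r : ℤ) : ℂ) * ((σ w : ℤ) : ℂ) := by
      rw [map_mul]; push_cast; ring
    have hcomul : ((r * w : W) : V ≃ₗᵢ[ℝ] V) b
        = (r : V ≃ₗᵢ[ℝ] V) ((w : V ≃ₗᵢ[ℝ] V) b) := rfl
    have hinner : (inner ℝ (((r * w : W) : V ≃ₗᵢ[ℝ] V) b) a : ℝ)
        = (inner ℝ ((w : V ≃ₗᵢ[ℝ] V) b) a : ℝ)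
          + (inner ℝ (((r * w : W) : V ≃ₗᵢ[ℝ] V) b) q : ℝ) := by
      conv_lhs => rw [← hfix]
      rw [inner_add_right, hcomul,
        (r : V ≃ₗᵢ[ℝ] V).inner_map_map ((w : V ≃ₗᵢ[ℝ] V) b) a]
    rw [hσ, hinner]
    push_cast
    rw [mul_add, Complex.exp_add]
    have h3 := hexpeq (r * w)
    push_cast at h3
    rw [h3]
    linear_combination (((σ w : ℤ) : ℂ)
      * Complex.exp (2 * Real.pi * Complex.I * ((inner ℝ ((w : V ≃ₗᵢ[ℝ] V) b) a : ℝ) : ℂ))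
      * (1 - ((σ r : ℤ) : ℂ)
        * Complex.exp (2 * Real.pi * Complex.I * ((inner ℝ ρ q : ℝ) : ℂ)))) * hsign
  rw [hsign, neg_one_mul] at key
  linear_combination (1 / 2 : ℂ) * key
end

section
/- Let V be a finite-dimensional real inner product space, W a finite group of linear isometries of V, and σ : W → {+1, −1} a group homomorphism; for b ∈ V define the orbit function φ^σ_b : V → ℂ by φ^σ_b(a) = Σ_{w ∈ W} σ(w)·exp(2πi⟨w·b, a⟩). Let Q be a W-invariant additive subgroup of V, let P∨ be an additive subgroup of V with ⟨p, q⟩ ∈ ℤ for all p ∈ P∨ and q ∈ Q, let ρ∨ ∈ V satisfy ρ∨ − w·ρ∨ ∈ P∨ for all w ∈ W, and let M be a positive integer. Then for every a ∈ V with M·a − ρ∨ ∈ P∨, every b ∈ V, every w' ∈ W and every q ∈ Q, φ^σ_{w'·b + M·q}(a) = σ(w')·exp(2πi⟨q, ρ∨⟩)·φ^σ_b(a). -/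
private lemma exp_shift (x y : ℝ) (n : ℤ) (h : x = y + n) :
    Complex.exp (2 * Real.pi * Complex.I * (x : ℂ)) =
      Complex.exp (2 * Real.pi * Complex.I * (y : ℂ)) := by
  subst h
  push_cast
  rw [mul_add, Complex.exp_add]
  have h2 : (2 : ℂ) * Real.pi * Complex.I * n = n * (2 * Real.pi * Complex.I) := by ring
  rw [h2, Complex.exp_int_mul_two_pi_mul_I, mul_one]



/-- With `Q` a `W`-invariant additive subgroup, `P∨` ℤ-dual to `Q`,
`ρ∨` an admissible shift and `M ≥ 1`, for every point `a` of the shifted grid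
(`M·a - ρ∨ ∈ P∨`), every `b ∈ V`, `w' ∈ W`, `q ∈ Q`:
`φ^σ_{w'·b + M·q}(a) = σ(w') · exp(2πi⟪q, ρ∨⟫) · φ^σ_b(a)`. -/
theorem stmt_9 {V : Type*} [NormedAddCommGroup V] [InnerProductSpace ℝ V]
    [FiniteDimensional ℝ V]
    (W : Subgroup (V ≃ₗᵢ[ℝ] V)) [Fintype W] (σ : W →* ℤˣ)
    (Q Pv : AddSubgroup V)
    (hQ : ∀ w : W, ∀ q ∈ Q, (w : V ≃ₗᵢ[ℝ] V) q ∈ Q)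
    (hdual : ∀ p ∈ Pv, ∀ q ∈ Q, ∃ m : ℤ, (inner ℝ p q : ℝ) = m)
    (ρv : V) (hρv : ∀ w : W, ρv - (w : V ≃ₗᵢ[ℝ] V) ρv ∈ Pv)
    (M : ℕ) (hM : 0 < M)
    (a : V) (ha : (M : ℝ) • a - ρv ∈ Pv)
    (b : V) (w' : W) (q : V) (hq : q ∈ Q) :
    orbitFn W σ ((w' : V ≃ₗᵢ[ℝ] V) b + (M : ℝ) • q) a =
      ((σ w' : ℤ) : ℂ) *
        Complex.exp (2 * Real.pi * Complex.I * ((inner ℝ q ρv : ℝ) : ℂ)) *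
        orbitFn W σ b a := by
  classical
  unfold orbitFn
  rw [Finset.mul_sum]
  apply Fintype.sum_equiv (Equiv.mulRight w')
  intro w
  simp only [Equiv.coe_mulRight]
  obtain ⟨n₁, hn₁⟩ := hdual _ ha _ (hQ w q hq)
  obtain ⟨n₂, hn₂⟩ := hdual _ (hρv w⁻¹) _ hq
  have hcoe : ((w * w' : W) : V ≃ₗᵢ[ℝ] V) b = (w : V ≃ₗᵢ[ℝ] V) ((w' : V ≃ₗᵢ[ℝ] V) b) := rfl
  have hfix : (w : V ≃ₗᵢ[ℝ] V) (((w⁻¹ : W) : V ≃ₗᵢ[ℝ] V) ρv) = ρv := by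
    have h := congrArg (fun u : W => ((u : V ≃ₗᵢ[ℝ] V)) ρv) (mul_inv_cancel w)
    simpa using h
  have hwq : (inner ℝ ((w : V ≃ₗᵢ[ℝ] V) q) ρv : ℝ) = (inner ℝ q ρv : ℝ) - n₂ := by
    conv_lhs => rw [← hfix]
    rw [LinearIsometryEquiv.inner_map_map]
    have h3 : (inner ℝ q (((w⁻¹ : W) : V ≃ₗᵢ[ℝ] V) ρv) : ℝ)
        = (inner ℝ q ρv : ℝ) - (inner ℝ q (ρv - ((w⁻¹ : W) : V ≃ₗᵢ[ℝ] V) ρv) : ℝ) := by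
      rw [inner_sub_right]; ring
    have hc := real_inner_comm q (ρv - ((w⁻¹ : W) : V ≃ₗᵢ[ℝ] V) ρv)
    rw [h3]; linarith [hn₂, hc]
  have hMwq : (M : ℝ) * (inner ℝ ((w : V ≃ₗᵢ[ℝ] V) q) a : ℝ)
      = (inner ℝ q ρv : ℝ) - n₂ + n₁ := by
    have h4 : (M : ℝ) * (inner ℝ ((w : V ≃ₗᵢ[ℝ] V) q) a : ℝ)
        = (inner ℝ ((w : V ≃ₗᵢ[ℝ] V) q) ((M : ℝ) • a) : ℝ) := by
      rw [real_inner_smul_right]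
    have h5 : (inner ℝ ((w : V ≃ₗᵢ[ℝ] V) q) ((M : ℝ) • a) : ℝ)
        = (inner ℝ ((w : V ≃ₗᵢ[ℝ] V) q) ρv : ℝ)
          + (inner ℝ ((w : V ≃ₗᵢ[ℝ] V) q) ((M : ℝ) • a - ρv) : ℝ) := by
      rw [inner_sub_right]; ring
    have hc2 := real_inner_comm ((w : V ≃ₗᵢ[ℝ] V) q) ((M : ℝ) • a - ρv)
    rw [h4, h5, hwq]; linarith [hn₁, hc2]
  have key : (inner ℝ ((w : V ≃ₗᵢ[ℝ] V) ((w' : V ≃ₗᵢ[ℝ] V) b + (M : ℝ) • q)) a : ℝ)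
      = ((inner ℝ q ρv : ℝ) + (inner ℝ (((w * w' : W) : V ≃ₗᵢ[ℝ] V) b) a : ℝ)) + (n₁ - n₂ : ℤ) := by
    rw [map_add, map_smul, inner_add_left, real_inner_smul_left, hcoe]
    push_cast
    linarith [hMwq]
  have hexp := exp_shift _ _ _ key
  rw [hexp]
  have hsplit : ((((inner ℝ q ρv : ℝ) + (inner ℝ (((w * w' : W) : V ≃ₗᵢ[ℝ] V) b) a : ℝ)) : ℝ) : ℂ)
      = ((inner ℝ q ρv : ℝ) : ℂ) + ((inner ℝ (((w * w' : W) : V ≃ₗᵢ[ℝ] V) b) a : ℝ) : ℂ) := by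
    push_cast; ring
  rw [hsplit, mul_add, Complex.exp_add, map_mul, hcoe]
  rcases Int.units_eq_one_or (σ w') with h | h <;>
    simp [h, Units.val_mul] <;> push_cast <;> ring
end

section
/- Let V be a finite-dimensional real inner product space, W a finite group of linear isometries of V, and σ : W → {+1, −1} a group homomorphism; for b ∈ V define the orbit function φ^σ_b : V → ℂ by φ^σ_b(a) = Σ_{w ∈ W} σ(w)·exp(2πi⟨w·b, a⟩). Let Q be a W-invariant additive subgroup of V, let P∨ be an additive subgroup of V with ⟨p, q⟩ ∈ ℤ for all p ∈ P∨ and q ∈ Q, let ρ∨ ∈ V satisfy ρ∨ − w·ρ∨ ∈ P∨ for all w ∈ W, and let M be a positive integer. If b ∈ V is such that there exist r ∈ W and q ∈ Q with r·b + M·q = b and σ(r)·exp(2πi⟨q, ρ∨⟩) = −1, then φ^σ_b(a) = 0 for every a ∈ V with M·a − ρ∨ ∈ P∨. -/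
/-- With `Q` a `W`-invariant additive subgroup, `P∨` ℤ-dual to `Q`,
`ρ∨` an admissible shift and `M ≥ 1`, if the label `b` is fixed by a rescaled dual
affine map, `r·b + M·q = b` with `σ(r)·exp(2πi⟪q, ρ∨⟫) = -1`, then `φ^σ_b(a) = 0`
for every grid point `a` (`M·a - ρ∨ ∈ P∨`). -/
theorem stmt_10 {V : Type*} [NormedAddCommGroup V] [InnerProductSpace ℝ V]
    [FiniteDimensional ℝ V]
    (W : Subgroup (V ≃ₗᵢ[ℝ] V)) [Fintype W] (σ : W →* ℤˣ)
    (Q Pv : AddSubgroup V)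
    (hQ : ∀ w : W, ∀ q ∈ Q, (w : V ≃ₗᵢ[ℝ] V) q ∈ Q)
    (hdual : ∀ p ∈ Pv, ∀ q ∈ Q, ∃ m : ℤ, (inner ℝ p q : ℝ) = m)
    (ρv : V) (hρv : ∀ w : W, ρv - (w : V ≃ₗᵢ[ℝ] V) ρv ∈ Pv)
    (M : ℕ) (hM : 0 < M)
    (b : V)
    (hb : ∃ r : W, ∃ q ∈ Q, (r : V ≃ₗᵢ[ℝ] V) b + (M : ℝ) • q = b ∧
      ((σ r : ℤ) : ℂ) * Complex.exp (2 * Real.pi * Complex.I * ((inner ℝ q ρv : ℝ) : ℂ))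
        = -1) :
    ∀ a : V, (M : ℝ) • a - ρv ∈ Pv → orbitFn W σ b a = 0 := by
  intro a ha
  obtain ⟨r, q, hqQ, hrb, hσ⟩ := hb
  set s : ℂ := ((σ r : ℤ) : ℂ) with hs
  have hs2 : s * s = 1 := by
    rw [hs, ← Int.cast_mul, ← Units.val_mul, Int.units_mul_self]
    norm_num
  have hs0 : s ≠ 0 := by
    intro h; rw [h, zero_mul] at hs2; exact one_ne_zero hs2.symm
  set X : ℂ := Complex.exp (2 * Real.pi * Complex.I * ((inner ℝ q ρv : ℝ) : ℂ)) with hXdef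
  have hX0 : X ≠ 0 := Complex.exp_ne_zero _
  have hXval : X = -s := by
    apply mul_left_cancel₀ hs0
    rw [hσ, mul_neg, hs2]
  have hrbb : (r : V ≃ₗᵢ[ℝ] V) b = b - (M : ℝ) • q :=
    eq_sub_of_add_eq hrb
  have key : ∀ w : W,
      ((σ (w * r) : ℤ) : ℂ) * Complex.exp (2 * Real.pi * Complex.I *
        ((inner ℝ (((w * r : W) : V ≃ₗᵢ[ℝ] V) b) a : ℝ) : ℂ))
      = -(((σ w : ℤ) : ℂ) * Complex.exp (2 * Real.pi * Complex.I *
        ((inner ℝ ((w : V ≃ₗᵢ[ℝ] V) b) a : ℝ) : ℂ))) := by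
    intro w
    obtain ⟨m₁, hm₁⟩ := hdual _ ha _ (hQ w q hqQ)
    obtain ⟨m₂, hm₂⟩ := hdual _ (hρv w⁻¹) q hqQ
    have hw : ((w * r : W) : V ≃ₗᵢ[ℝ] V) b
        = (w : V ≃ₗᵢ[ℝ] V) b - (M : ℝ) • (w : V ≃ₗᵢ[ℝ] V) q := by
      rw [Subgroup.coe_mul, LinearIsometryEquiv.coe_mul, Function.comp_apply, hrbb,
        map_sub, map_smul]
    have hfix : (w : V ≃ₗᵢ[ℝ] V) (((w⁻¹ : W) : V ≃ₗᵢ[ℝ] V) ρv) = ρv := by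
      rw [InvMemClass.coe_inv, LinearIsometryEquiv.coe_inv]
      exact (w : V ≃ₗᵢ[ℝ] V).apply_symm_apply ρv
    have h3 : (inner ℝ ((w : V ≃ₗᵢ[ℝ] V) q) ρv : ℝ)
        = inner ℝ q (((w⁻¹ : W) : V ≃ₗᵢ[ℝ] V) ρv) := by
      conv_lhs => rw [← hfix]
      exact (w : V ≃ₗᵢ[ℝ] V).inner_map_map q _
    have h4 : (inner ℝ q (((w⁻¹ : W) : V ≃ₗᵢ[ℝ] V) ρv) : ℝ)
        = inner ℝ q ρv - (m₂ : ℝ) := by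
      have hc : (inner ℝ (ρv - ((w⁻¹ : W) : V ≃ₗᵢ[ℝ] V) ρv) q : ℝ)
          = inner ℝ q ρv - inner ℝ q (((w⁻¹ : W) : V ≃ₗᵢ[ℝ] V) ρv) := by
        rw [real_inner_comm, inner_sub_right]
      rw [hc] at hm₂
      linarith
    have hR : (inner ℝ (((w * r : W) : V ≃ₗᵢ[ℝ] V) b) a : ℝ)
        = inner ℝ ((w : V ≃ₗᵢ[ℝ] V) b) a - ((m₁ : ℝ) + inner ℝ q ρv - (m₂ : ℝ)) := by
      rw [hw, inner_sub_left, real_inner_smul_left]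
      have h5 : (M : ℝ) * inner ℝ ((w : V ≃ₗᵢ[ℝ] V) q) a
          = (m₁ : ℝ) + inner ℝ q ρv - (m₂ : ℝ) := by
        have h6 : (M : ℝ) * (inner ℝ ((w : V ≃ₗᵢ[ℝ] V) q) a : ℝ)
            = inner ℝ ((w : V ≃ₗᵢ[ℝ] V) q) ((M : ℝ) • a) := (real_inner_smul_right _ _ _).symm
        have h7 : (inner ℝ ((w : V ≃ₗᵢ[ℝ] V) q) ((M : ℝ) • a) : ℝ)
            = inner ℝ ((w : V ≃ₗᵢ[ℝ] V) q) ((M : ℝ) • a - ρv)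
              + inner ℝ ((w : V ≃ₗᵢ[ℝ] V) q) ρv := by
          rw [inner_sub_right]; ring
        have h8 : (inner ℝ ((w : V ≃ₗᵢ[ℝ] V) q) ((M : ℝ) • a - ρv) : ℝ) = (m₁ : ℝ) := by
          rw [real_inner_comm]; exact hm₁
        rw [h6, h7, h8, h3, h4]; ring
      rw [h5]
    have hsplit : Complex.exp (2 * Real.pi * Complex.I *
          ((inner ℝ (((w * r : W) : V ≃ₗᵢ[ℝ] V) b) a : ℝ) : ℂ)) * X
        = Complex.exp (2 * Real.pi * Complex.I *
          ((inner ℝ ((w : V ≃ₗᵢ[ℝ] V) b) a : ℝ) : ℂ)) := by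
      rw [hXdef, ← Complex.exp_add]
      have harg : 2 * Real.pi * Complex.I *
            ((inner ℝ (((w * r : W) : V ≃ₗᵢ[ℝ] V) b) a : ℝ) : ℂ)
            + 2 * Real.pi * Complex.I * ((inner ℝ q ρv : ℝ) : ℂ)
          = 2 * Real.pi * Complex.I * ((inner ℝ ((w : V ≃ₗᵢ[ℝ] V) b) a : ℝ) : ℂ)
            + ((m₂ - m₁ : ℤ) : ℂ) * (2 * Real.pi * Complex.I) := by
        rw [hR]; push_cast; ring
      rw [harg, Complex.exp_add, Complex.exp_int_mul_two_pi_mul_I, mul_one]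
    have hσmul : ((σ (w * r) : ℤ) : ℂ) = ((σ w : ℤ) : ℂ) * s := by
      rw [map_mul, Units.val_mul, Int.cast_mul]
    apply mul_right_cancel₀ hX0
    linear_combination
      (Complex.exp (2 * Real.pi * Complex.I *
        ((inner ℝ (((w * r : W) : V ≃ₗᵢ[ℝ] V) b) a : ℝ) : ℂ)) * X) * hσmul
      + ((σ w : ℤ) : ℂ) * s * hsplit
      + ((σ w : ℤ) : ℂ) * Complex.exp (2 * Real.pi * Complex.I *
          ((inner ℝ ((w : V ≃ₗᵢ[ℝ] V) b) a : ℝ) : ℂ)) * hXval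
  have hself : orbitFn W σ b a = - orbitFn W σ b a := by
    unfold orbitFn
    calc ∑ w : W, ((σ w : ℤ) : ℂ) * Complex.exp (2 * Real.pi * Complex.I *
            ((inner ℝ ((w : V ≃ₗᵢ[ℝ] V) b) a : ℝ) : ℂ))
        = ∑ w : W, ((σ (w * r) : ℤ) : ℂ) * Complex.exp (2 * Real.pi * Complex.I *
            ((inner ℝ (((w * r : W) : V ≃ₗᵢ[ℝ] V) b) a : ℝ) : ℂ)) :=
          (Fintype.sum_equiv (Equiv.mulRight r) _ _ (fun w => rfl)).symm
      _ = ∑ w : W, -(((σ w : ℤ) : ℂ) * Complex.exp (2 * Real.pi * Complex.I *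
            ((inner ℝ ((w : V ≃ₗᵢ[ℝ] V) b) a : ℝ) : ℂ))) :=
          Finset.sum_congr rfl (fun w _ => key w)
      _ = -∑ w : W, ((σ w : ℤ) : ℂ) * Complex.exp (2 * Real.pi * Complex.I *
            ((inner ℝ ((w : V ≃ₗᵢ[ℝ] V) b) a : ℝ) : ℂ)) := Finset.sum_neg_distrib _
  linear_combination (1 / 2 : ℂ) * hself
end

section
/- Let n ≥ 2 and M ≥ 0 be integers, and let N be the number of (n+1)-tuples (u_0, u_1, …, u_n) of integers with u_0 ≥ 1, u_1 ≥ 1, …, u_{n−1} ≥ 1, u_n ≥ 0 and u_0 + 2u_1 + 2u_2 + ⋯ + 2u_{n−1} + u_n = M. Then: if M − (2n−1) = 2k for an integer k ≥ 0, then N = C(n+k, n) + C(n+k−1, n); if M − (2n−1) = 2k+1 for an integer k ≥ 0, then N = 2·C(n+k, n); and if M < 2n−1, then N = 0. -/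
open Finset

private def cnt : ℕ → ℕ → ℕ
  | 0, m => m + 1
  | j+1, 0 => cnt j 0
  | j+1, 1 => cnt j 1
  | j+1, m+2 => cnt j (m+2) + cnt (j+1) m

private def nu (n m : ℕ) : ℕ :=
  if m % 2 = 0 then (n + m / 2).choose n + (n + m / 2 - 1).choose n
  else 2 * (n + m / 2).choose n

private lemma nu_even (n k : ℕ) : nu n (2 * k) = (n + k).choose n + (n + k - 1).choose n := by
  have h1 : (2 * k) % 2 = 0 := by omega
  have h2 : (2 * k) / 2 = k := by omega
  simp [nu, h1, h2]

private lemma nu_odd (n k : ℕ) : nu n (2 * k + 1) = 2 * (n + k).choose n := by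
  have h1 : (2 * k + 1) % 2 = 1 := by omega
  have h2 : (2 * k + 1) / 2 = k := by omega
  simp [nu, h1, h2]

private lemma nu_rec (n m : ℕ) : nu n (m + 2) + nu (n + 1) m = nu (n + 1) (m + 2) := by
  rcases Nat.even_or_odd m with ⟨k, hk⟩ | ⟨k, hk⟩
  · have hm : m = 2 * k := by omega
    subst hm
    have r1 : 2 * k + 2 = 2 * (k + 1) := by omega
    rw [r1, nu_even, nu_even, nu_even]
    simp only [show n + (k+1) - 1 = n + k from by omega, show n + 1 + k - 1 = n + k from by omega,
      show n + 1 + (k+1) - 1 = n + k + 1 from by omega, show n + (k+1) = n + k + 1 from by omega,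
      show n + 1 + k = n + k + 1 from by omega, show n + 1 + (k+1) = n + k + 2 from by omega,
      show n + k + 1 - 1 = n + k from by omega, show n + k + 2 - 1 = n + k + 1 from by omega]
    have q1 : (n + k + 2).choose (n + 1) = (n + k + 1).choose n + (n + k + 1).choose (n + 1) :=
      Nat.choose_succ_succ _ _
    have q2 : (n + k + 1).choose (n + 1) = (n + k).choose n + (n + k).choose (n + 1) :=
      Nat.choose_succ_succ _ _
    omega
  · have hm : m = 2 * k + 1 := by omega
    subst hm
    have r1 : 2 * k + 1 + 2 = 2 * (k + 1) + 1 := by omega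
    rw [r1, nu_odd, nu_odd, nu_odd]
    simp only [show n + (k+1) = n + k + 1 from by omega, show n + 1 + k = n + k + 1 from by omega,
      show n + 1 + (k+1) = n + k + 2 from by omega]
    have q1 : (n + k + 2).choose (n + 1) = (n + k + 1).choose n + (n + k + 1).choose (n + 1) :=
      Nat.choose_succ_succ _ _
    omega

private lemma cnt_eq_nu : ∀ j m, cnt j m = nu (j+1) m := by
  intro j
  induction j with
  | zero =>
    intro m
    rcases Nat.even_or_odd m with ⟨k, hk⟩ | ⟨k, hk⟩
    · have hm : m = 2 * k := by omega
      subst hm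
      rw [nu_even]
      simp [cnt, Nat.choose_one_right]
      omega
    · subst hk
      rw [nu_odd]
      simp [cnt, Nat.choose_one_right]
      omega
  | succ j ih =>
    intro m
    induction m using Nat.strong_induction_on with
    | _ m ihm =>
      match m with
      | 0 =>
        have h : cnt (j+1) 0 = cnt j 0 := by simp [cnt]
        rw [h, ih]
        have e0 : (0:ℕ) = 2 * 0 := rfl
        rw [e0, nu_even, nu_even]
        simp [Nat.choose_succ_self, Nat.choose_self]
      | 1 =>
        have h : cnt (j+1) 1 = cnt j 1 := by simp [cnt]
        rw [h, ih]
        have e0 : (1:ℕ) = 2 * 0 + 1 := rfl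
        rw [e0, nu_odd, nu_odd]
        simp [Nat.choose_self]
      | m+2 =>
        have hrec : cnt (j+1) (m+2) = cnt j (m+2) + cnt (j+1) m := by simp [cnt]
        rw [hrec, ih, ihm m (by omega)]
        exact nu_rec (j+1) m

private def PP (j m : ℕ) : Set (ℕ × (Fin j → ℕ) × ℕ) :=
  {p | p.1 + 2 * ∑ i, p.2.1 i + p.2.2 = m}

private lemma mem_PP {j m : ℕ} {p : ℕ × (Fin j → ℕ) × ℕ} :
    p ∈ PP j m ↔ p.1 + 2 * ∑ i, p.2.1 i + p.2.2 = m := Iff.rfl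

private lemma PP_finite (j m : ℕ) : (PP j m).Finite := by
  apply Set.Finite.subset
    ((Set.finite_Iic m).prod ((Set.Finite.pi fun _ : Fin j => Set.finite_Iic m).prod
      (Set.finite_Iic m)))
  rintro ⟨a, w, b⟩ h
  have hsum : a + 2 * ∑ i, w i + b = m := h
  refine ⟨by simp only [Set.mem_Iic]; omega, ⟨?_, by simp only [Set.mem_Iic]; omega⟩⟩
  intro i _
  have : w i ≤ ∑ i, w i := Finset.single_le_sum (fun i _ => Nat.zero_le _) (Finset.mem_univ i)
  simp only [Set.mem_Iic]
  omega

private lemma sum_eq_head_tail {j : ℕ} (w : Fin (j+1) → ℕ) :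
    ∑ i, w i = w 0 + ∑ i, Fin.tail w i := by
  conv_lhs => rw [← Fin.cons_self_tail w]
  rw [Fin.sum_cons]

private lemma ncard_PP : ∀ j m, (PP j m).ncard = cnt j m := by
  intro j
  induction j with
  | zero =>
    intro m
    have himg : PP 0 m =
        (fun q : ℕ × ℕ => ((q.1, (fun i => i.elim0 : Fin 0 → ℕ), q.2) : ℕ × (Fin 0 → ℕ) × ℕ)) ''
          ↑(Finset.HasAntidiagonal.antidiagonal m) := by
      ext p
      constructor
      · intro h
        have hsum : p.1 + 2 * ∑ i, p.2.1 i + p.2.2 = m := h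
        simp only [Finset.univ_eq_empty, Finset.sum_empty] at hsum
        refine ⟨(p.1, p.2.2), ?_, ?_⟩
        · simp only [Finset.mem_coe, Finset.HasAntidiagonal.mem_antidiagonal]; omega
        · exact Prod.ext rfl (Prod.ext (Subsingleton.elim _ _) rfl)
      · rintro ⟨⟨x, y⟩, hxy, rfl⟩
        simp only [Finset.mem_coe, Finset.HasAntidiagonal.mem_antidiagonal] at hxy
        show x + 2 * ∑ i : Fin 0, _ + y = m
        simp only [Finset.univ_eq_empty, Finset.sum_empty]
        omega
    have hinj : Function.Injective
        (fun q : ℕ × ℕ => ((q.1, (fun i => i.elim0 : Fin 0 → ℕ), q.2) : ℕ × (Fin 0 → ℕ) × ℕ)) := by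
      rintro ⟨x, y⟩ ⟨x', y'⟩ h
      simp only [Prod.mk.injEq] at h
      exact Prod.ext h.1 h.2.2
    rw [himg, Set.ncard_image_of_injective _ hinj, Set.ncard_coe_finset,
      Finset.Nat.card_antidiagonal]
    simp [cnt]
  | succ j ih =>
    intro m
    induction m using Nat.strong_induction_on with
    | _ m ihm => ?_
    set S0 : Set (ℕ × (Fin (j+1) → ℕ) × ℕ) := PP (j+1) m ∩ {p | p.2.1 0 = 0} with hS0
    set S1 : Set (ℕ × (Fin (j+1) → ℕ) × ℕ) := PP (j+1) m ∩ {p | p.2.1 0 ≠ 0} with hS1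
    have hsplit : PP (j+1) m = S0 ∪ S1 := by
      ext p; by_cases hp : p.2.1 0 = 0 <;> simp [hS0, hS1, hp]
    have hdisj : Disjoint S0 S1 := by
      rw [Set.disjoint_left]
      rintro p ⟨_, h0⟩ ⟨_, h1⟩
      exact h1 h0
    have hS0card : S0.ncard = cnt j m := by
      have himg : S0 = (fun p : ℕ × (Fin j → ℕ) × ℕ =>
          ((p.1, Fin.cons 0 p.2.1, p.2.2) : ℕ × (Fin (j+1) → ℕ) × ℕ)) '' PP j m := by
        ext p
        constructor
        · rintro ⟨hmem, h0⟩
          have hsum : p.1 + 2 * ∑ i, p.2.1 i + p.2.2 = m := hmem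
          have h0' : p.2.1 0 = 0 := h0
          refine ⟨(p.1, Fin.tail p.2.1, p.2.2), ?_, ?_⟩
          · show p.1 + 2 * ∑ i, Fin.tail p.2.1 i + p.2.2 = m
            have := sum_eq_head_tail p.2.1
            omega
          · refine Prod.ext rfl (Prod.ext ?_ rfl)
            show Fin.cons 0 (Fin.tail p.2.1) = p.2.1
            rw [← h0']
            exact Fin.cons_self_tail p.2.1
        · rintro ⟨⟨x, v, y⟩, hmem, rfl⟩
          have hsum : x + 2 * ∑ i, v i + y = m := hmem
          constructor
          · show x + 2 * ∑ i, Fin.cons 0 v i + y = m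
            rw [Fin.sum_cons]
            omega
          · show (Fin.cons 0 v : Fin (j+1) → ℕ) 0 = 0
            simp
      have hinj : Function.Injective (fun p : ℕ × (Fin j → ℕ) × ℕ =>
          ((p.1, Fin.cons 0 p.2.1, p.2.2) : ℕ × (Fin (j+1) → ℕ) × ℕ)) := by
        rintro ⟨a, w, b⟩ ⟨a', w', b'⟩ h
        simp only [Prod.mk.injEq] at h
        refine Prod.ext h.1 (Prod.ext ?_ h.2.2)
        funext i
        have := congrFun h.2.1 i.succ
        simpa using this
      rw [himg, Set.ncard_image_of_injective _ hinj, ih]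
    rcases lt_or_ge m 2 with hm2 | hm2
    · have hS1empty : S1 = ∅ := by
        ext p
        simp only [Set.mem_empty_iff_false, iff_false]
        rintro ⟨hmem, h0⟩
        have hsum : p.1 + 2 * ∑ i, p.2.1 i + p.2.2 = m := hmem
        have h0' : p.2.1 0 ≠ 0 := h0
        have : p.2.1 0 ≤ ∑ i, p.2.1 i :=
          Finset.single_le_sum (fun i _ => Nat.zero_le _) (Finset.mem_univ 0)
        omega
      have hP : (PP (j+1) m).ncard = cnt j m := by
        rw [hsplit, hS1empty, Set.union_empty, hS0card]
      rw [hP]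
      interval_cases m <;> simp [cnt]
    · obtain ⟨m', rfl⟩ : ∃ m', m = m' + 2 := ⟨m - 2, by omega⟩
      have hS1card : S1.ncard = cnt (j+1) m' := by
        have himg : S1 = (fun p : ℕ × (Fin (j+1) → ℕ) × ℕ =>
            ((p.1, Fin.cons (p.2.1 0 + 1) (Fin.tail p.2.1), p.2.2) :
              ℕ × (Fin (j+1) → ℕ) × ℕ)) '' PP (j+1) m' := by
          ext p
          constructor
          · rintro ⟨hmem, h0⟩
            have hsum : p.1 + 2 * ∑ i, p.2.1 i + p.2.2 = m' + 2 := hmem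
            have h0' : p.2.1 0 ≠ 0 := h0
            refine ⟨(p.1, Fin.cons (p.2.1 0 - 1) (Fin.tail p.2.1), p.2.2), ?_, ?_⟩
            · show p.1 + 2 * ∑ i, Fin.cons (p.2.1 0 - 1) (Fin.tail p.2.1) i + p.2.2 = m'
              rw [Fin.sum_cons]
              have := sum_eq_head_tail p.2.1
              omega
            · refine Prod.ext rfl (Prod.ext ?_ rfl)
              show Fin.cons (Fin.cons (p.2.1 0 - 1) (Fin.tail p.2.1) 0 + 1)
                  (Fin.tail (Fin.cons (p.2.1 0 - 1) (Fin.tail p.2.1))) = p.2.1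
              rw [Fin.cons_zero, Fin.tail_cons]
              rw [show p.2.1 0 - 1 + 1 = p.2.1 0 by omega]
              exact Fin.cons_self_tail p.2.1
          · rintro ⟨⟨x, v, y⟩, hmem, rfl⟩
            have hsum : x + 2 * ∑ i, v i + y = m' := hmem
            have hv := sum_eq_head_tail v
            constructor
            · show x + 2 * ∑ i, Fin.cons (v 0 + 1) (Fin.tail v) i + y = m' + 2
              rw [Fin.sum_cons]
              omega
            · show (Fin.cons (v 0 + 1) (Fin.tail v) : Fin (j+1) → ℕ) 0 ≠ 0
              simp
        have hinj : Function.Injective (fun p : ℕ × (Fin (j+1) → ℕ) × ℕ =>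
            ((p.1, Fin.cons (p.2.1 0 + 1) (Fin.tail p.2.1), p.2.2) :
              ℕ × (Fin (j+1) → ℕ) × ℕ)) := by
          rintro ⟨a, w, b⟩ ⟨a', w', b'⟩ h
          simp only [Prod.mk.injEq] at h
          refine Prod.ext h.1 (Prod.ext ?_ h.2.2)
          have hc := h.2.1
          have h00 : w 0 + 1 = w' 0 + 1 := by
            have := congrFun hc 0
            simpa using this
          have htl : Fin.tail w = Fin.tail w' := by
            funext i
            have := congrFun hc i.succ
            simpa [Fin.tail] using this
          rw [← Fin.cons_self_tail w, ← Fin.cons_self_tail w', htl]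
          rw [show w 0 = w' 0 by omega]
        rw [himg, Set.ncard_image_of_injective _ hinj, ihm m' (by omega)]
      rw [hsplit, Set.ncard_union_eq hdisj ((PP_finite _ _).subset Set.inter_subset_left)
        ((PP_finite _ _).subset Set.inter_subset_left), hS0card, hS1card]
      exact (by simp [cnt] : cnt (j+1) (m'+2) = cnt j (m'+2) + cnt (j+1) m').symm

private lemma sumdec (j : ℕ) (u : Fin (j+3) → ℤ) :
    ∑ i : Fin (j+3), (if (i : ℕ) = 0 ∨ (i : ℕ) = j+2 then 1 else 2) * u i
      = u 0 + 2 * ∑ i : Fin (j+1), u ((i.castSucc).succ) + u (Fin.last (j+2)) := by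
  rw [Fin.sum_univ_succ]
  rw [show (∑ i : Fin (j+2), (if ((i.succ : Fin (j+3)) : ℕ) = 0 ∨ ((i.succ : Fin (j+3)) : ℕ) = j+2
      then (1:ℤ) else 2) * u i.succ) =
      ∑ i : Fin (j+1), (if (((i.castSucc.succ : Fin (j+3)) : ℕ) = 0 ∨
        ((i.castSucc.succ : Fin (j+3)) : ℕ) = j+2) then (1:ℤ) else 2) * u i.castSucc.succ +
      (if (((Fin.last (j+1)).succ : Fin (j+3)) : ℕ) = 0 ∨
        (((Fin.last (j+1)).succ : Fin (j+3)) : ℕ) = j+2 then (1:ℤ) else 2) *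
          u (Fin.last (j+1)).succ from Fin.sum_univ_castSucc _]
  have h0 : ((0 : Fin (j+3)) : ℕ) = 0 ∨ ((0 : Fin (j+3)) : ℕ) = j + 2 := Or.inl rfl
  rw [if_pos h0, one_mul]
  have hlast : (((Fin.last (j+1)).succ : Fin (j+3)) : ℕ) = j + 2 := by simp
  rw [if_pos (Or.inr hlast)]
  have hmid : ∀ i : Fin (j+1), ¬(((i.castSucc.succ : Fin (j+3)) : ℕ) = 0 ∨
      ((i.castSucc.succ : Fin (j+3)) : ℕ) = j+2) := by
    intro i
    have : ((i.castSucc.succ : Fin (j+3)) : ℕ) = (i : ℕ) + 1 := by simp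
    rw [this]
    have := i.isLt
    omega
  rw [Finset.sum_congr rfl fun i _ => by rw [if_neg (hmid i)]]
  have hl : (Fin.last (j+1)).succ = Fin.last (j+2) := by
    ext; simp
  rw [hl, Finset.mul_sum]
  ring

private def SS (j : ℕ) (M : ℕ) : Set (Fin (j+3) → ℤ) :=
  {u | (∀ i : Fin (j+3), (i : ℕ) < j + 2 → 1 ≤ u i) ∧ 0 ≤ u (Fin.last (j+2)) ∧
    ∑ i : Fin (j+3), (if (i : ℕ) = 0 ∨ (i : ℕ) = j+2 then 1 else 2) * u i = (M : ℤ)}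

private def phi (j : ℕ) (p : ℕ × (Fin (j+1) → ℕ) × ℕ) : Fin (j+3) → ℤ :=
  Fin.cons ((p.1 : ℤ) + 1) (Fin.snoc (fun i => (p.2.1 i : ℤ) + 1) (p.2.2 : ℤ))

private lemma phi_zero (j : ℕ) (p : ℕ × (Fin (j+1) → ℕ) × ℕ) :
    phi j p 0 = (p.1 : ℤ) + 1 := by
  simp [phi]

private lemma phi_mid (j : ℕ) (p : ℕ × (Fin (j+1) → ℕ) × ℕ) (i : Fin (j+1)) :
    phi j p ((i.castSucc).succ) = (p.2.1 i : ℤ) + 1 := by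
  simp only [phi, Fin.cons_succ, Fin.snoc_castSucc]

private lemma phi_last (j : ℕ) (p : ℕ × (Fin (j+1) → ℕ) × ℕ) :
    phi j p (Fin.last (j+2)) = (p.2.2 : ℤ) := by
  have hl : (Fin.last (j+2)) = ((Fin.last (j+1)).succ : Fin (j+3)) := by ext; simp
  rw [hl]
  simp only [phi, Fin.cons_succ, Fin.snoc_last]

private lemma SS_eq_image (j m : ℕ) : SS j (m + (2*(j+2)-1)) = phi j '' PP (j+1) m := by
  ext u
  constructor
  · rintro ⟨h1, h2, h3⟩
    set a : ℕ := (u 0 - 1).toNat with ha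
    set w : Fin (j+1) → ℕ := fun i => (u ((i.castSucc).succ) - 1).toNat with hw
    set b : ℕ := (u (Fin.last (j+2))).toNat with hb
    have hu0 : 1 ≤ u 0 := h1 0 (by simp)
    have humid : ∀ i : Fin (j+1), 1 ≤ u ((i.castSucc).succ) := by
      intro i
      apply h1
      have : (((i.castSucc).succ : Fin (j+3)) : ℕ) = (i : ℕ) + 1 := by simp
      rw [this]
      have := i.isLt
      omega
    have hca : (a : ℤ) = u 0 - 1 := Int.toNat_of_nonneg (by omega)
    have hcw : ∀ i, (w i : ℤ) = u ((i.castSucc).succ) - 1 := fun i =>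
      Int.toNat_of_nonneg (by have := humid i; omega)
    have hcb : (b : ℤ) = u (Fin.last (j+2)) := Int.toNat_of_nonneg h2
    refine ⟨(a, w, b), ?_, ?_⟩
    · show a + 2 * ∑ i, w i + b = m
      have hd := sumdec j u
      rw [h3] at hd
      have hsw : ((∑ i, w i : ℕ) : ℤ) = ∑ i : Fin (j+1), (u ((i.castSucc).succ) - 1) := by
        push_cast
        exact Finset.sum_congr rfl fun i _ => hcw i
      have hsum1 : ∑ i : Fin (j+1), (u ((i.castSucc).succ) - 1)
          = ∑ i : Fin (j+1), u ((i.castSucc).succ) - (j+1) := by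
        rw [Finset.sum_sub_distrib]
        simp [mul_comm]
      have hM : ((m + (2*(j+2)-1) : ℕ) : ℤ) = (m : ℤ) + 2*j + 3 := by push_cast; omega
      have : ((a + 2 * ∑ i, w i + b : ℕ) : ℤ) = (m : ℤ) := by
        push_cast
        rw [hca, hcb, Finset.sum_congr rfl fun i _ => hcw i, hsum1]
        rw [hM] at hd
        linarith
      exact_mod_cast this
    · funext i
      induction i using Fin.cases with
      | zero => rw [phi_zero, hca]; ring
      | succ i =>
        induction i using Fin.lastCases with
        | last =>
          have hl : ((Fin.last (j+1)).succ : Fin (j+3)) = Fin.last (j+2) := by ext; simp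
          rw [hl, phi_last, hcb]
        | cast i =>
          rw [phi_mid, hcw i]
          ring
  · rintro ⟨p, hp, rfl⟩
    have hsum : p.1 + 2 * ∑ i, p.2.1 i + p.2.2 = m := hp
    refine ⟨?_, ?_, ?_⟩
    · intro i hi
      induction i using Fin.cases with
      | zero => rw [phi_zero]; omega
      | succ i =>
        induction i using Fin.lastCases with
        | last => simp at hi
        | cast i => rw [phi_mid]; omega
    · rw [phi_last]; omega
    · rw [sumdec, phi_zero, phi_last]
      rw [Finset.sum_congr rfl fun i _ => phi_mid j p i]
      push_cast
      rw [Finset.sum_add_distrib]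
      simp only [Finset.sum_const, Finset.card_univ, Fintype.card_fin, nsmul_eq_mul]
      have hcast : ((∑ i, p.2.1 i : ℕ) : ℤ) = ∑ x : Fin (j+1), (p.2.1 x : ℤ) := by push_cast; rfl
      push_cast
      omega

private lemma phi_injective (j : ℕ) : Function.Injective (phi j) := by
  rintro ⟨a, w, b⟩ ⟨a', w', b'⟩ h
  have h0 := congrFun h 0
  rw [phi_zero, phi_zero] at h0
  have hlast := congrFun h (Fin.last (j+2))
  rw [phi_last, phi_last] at hlast
  refine Prod.ext ?_ (Prod.ext ?_ ?_)
  · exact_mod_cast by omega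
  · funext i
    have hm := congrFun h ((i.castSucc).succ)
    rw [phi_mid, phi_mid] at hm
    exact_mod_cast by omega
  · exact_mod_cast hlast

private lemma ncard_SS (j m : ℕ) : (SS j (m + (2*(j+2)-1))).ncard = nu (j+2) m := by
  rw [SS_eq_image, Set.ncard_image_of_injective _ (phi_injective j), ncard_PP, cnt_eq_nu]

private lemma SS_empty (j M : ℕ) (hM : M < 2*(j+2)-1) : SS j M = ∅ := by
  ext u
  simp only [Set.mem_empty_iff_false, iff_false]
  rintro ⟨h1, h2, h3⟩
  rw [sumdec] at h3
  have hu0 : 1 ≤ u 0 := h1 0 (by simp)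
  have humid : ∀ i : Fin (j+1), 1 ≤ u ((i.castSucc).succ) := by
    intro i
    apply h1
    have : (((i.castSucc).succ : Fin (j+3)) : ℕ) = (i : ℕ) + 1 := by simp
    rw [this]
    have := i.isLt
    omega
  have hs : ((j:ℤ)+1) ≤ ∑ i : Fin (j+1), u ((i.castSucc).succ) := by
    calc ((j:ℤ)+1) = ∑ _i : Fin (j+1), (1:ℤ) := by
          simp [Finset.sum_const, Finset.card_univ]
    _ ≤ _ := Finset.sum_le_sum fun i _ => humid i
  have hMle : (2*j + 3 : ℤ) ≤ (M : ℤ) := by linarith [h2]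
  have : (M : ℤ) < 2*(j:ℤ) + 3 := by exact_mod_cast by omega
  omega

/-- For integers `n ≥ 2`, `M ≥ 0`, let `N` be the number of integer
tuples `(u_0, …, u_n)` with `u_0, …, u_{n-1} ≥ 1`, `u_n ≥ 0` and
`u_0 + 2u_1 + ⋯ + 2u_{n-1} + u_n = M`.  If `M - (2n-1) = 2k`, `k ≥ 0`, then
`N = C(n+k, n) + C(n+k-1, n)`; if `M - (2n-1) = 2k+1` then `N = 2·C(n+k, n)`;
and if `M < 2n-1` then `N = 0`. -/
theorem stmt_11 (n : ℕ) (hn : 2 ≤ n) (M : ℕ) :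
    (∀ k : ℕ, M = 2 * n - 1 + 2 * k →
      {u : Fin (n + 1) → ℤ | (∀ i : Fin (n + 1), (i : ℕ) < n → 1 ≤ u i) ∧
          0 ≤ u (Fin.last n) ∧
          ∑ i : Fin (n + 1),
            (if (i : ℕ) = 0 ∨ (i : ℕ) = n then 1 else 2) * u i = (M : ℤ)}.ncard =
        (n + k).choose n + (n + k - 1).choose n) ∧
    (∀ k : ℕ, M = 2 * n - 1 + (2 * k + 1) →
      {u : Fin (n + 1) → ℤ | (∀ i : Fin (n + 1), (i : ℕ) < n → 1 ≤ u i) ∧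
          0 ≤ u (Fin.last n) ∧
          ∑ i : Fin (n + 1),
            (if (i : ℕ) = 0 ∨ (i : ℕ) = n then 1 else 2) * u i = (M : ℤ)}.ncard =
        2 * (n + k).choose n) ∧
    (M < 2 * n - 1 →
      {u : Fin (n + 1) → ℤ | (∀ i : Fin (n + 1), (i : ℕ) < n → 1 ≤ u i) ∧
          0 ≤ u (Fin.last n) ∧
          ∑ i : Fin (n + 1),
            (if (i : ℕ) = 0 ∨ (i : ℕ) = n then 1 else 2) * u i = (M : ℤ)}.ncard = 0) := by
  obtain ⟨j, rfl⟩ : ∃ j, n = j + 2 := ⟨n - 2, by omega⟩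
  refine ⟨?_, ?_, ?_⟩
  · intro k hk
    have e : M = 2 * k + (2 * (j + 2) - 1) := by omega
    rw [e]
    have h := ncard_SS j (2 * k)
    rw [nu_even] at h
    exact h
  · intro k hk
    have e : M = 2 * k + 1 + (2 * (j + 2) - 1) := by omega
    rw [e]
    have h := ncard_SS j (2 * k + 1)
    rw [nu_odd] at h
    exact h
  · intro hM
    have h := SS_empty j M (by omega)
    show (SS j M).ncard = 0
    rw [h, Set.ncard_empty]
end

section
/- Let n ≥ 1 and k ≥ 0 be integers. Then the number of (n+1)-tuples (u_0, u_1, …, u_n) of nonnegative integers with u_0 + 2u_1 + 2u_2 + ⋯ + 2u_{n−1} + u_n = 2k equals C(n+k, n) + C(n+k−1, n), and the number of (n+1)-tuples (u_0, u_1, …, u_n) of nonnegative integers with u_0 + 2u_1 + ⋯ + 2u_{n−1} + u_n = 2k+1 equals 2·C(n+k, n). -/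
/-! auxiliary: cardinality of the set of (N+1)-tuples with given sum -/

private lemma aT_succ_succ (k n : ℕ) :
    Finset.Nat.antidiagonalTuple (k+1) n =
      (Finset.HasAntidiagonal.antidiagonal n).biUnion
        (fun p : ℕ × ℕ => (Finset.Nat.antidiagonalTuple k p.2).image
          (fun y : Fin k → ℕ => (Fin.cons p.1 y : Fin (k+1) → ℕ))) := by
  ext x
  simp only [Finset.Nat.mem_antidiagonalTuple, Finset.mem_biUnion, Finset.mem_image,
    Finset.HasAntidiagonal.mem_antidiagonal, Prod.exists]
  constructor
  · intro h
    exact ⟨x 0, ∑ i : Fin k, x i.succ, by rw [← h, Fin.sum_univ_succ], Fin.tail x,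
      rfl, Fin.cons_self_tail x⟩
  · rintro ⟨a, b, hab, y, hy, rfl⟩
    rw [Fin.sum_cons, hy, hab]

private lemma card_aT (k : ℕ) : ∀ n : ℕ,
    (Finset.Nat.antidiagonalTuple (k+1) n).card = (n + k).choose k := by
  induction k with
  | zero => intro n; simp
  | succ k ih =>
    intro n
    have hdisj : ∀ p ∈ Finset.HasAntidiagonal.antidiagonal n, ∀ q ∈ Finset.HasAntidiagonal.antidiagonal n, p ≠ q →
        Disjoint ((Finset.Nat.antidiagonalTuple (k+1) p.2).image
            (fun y : Fin (k+1) → ℕ => (Fin.cons p.1 y : Fin (k+2) → ℕ)))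
          ((Finset.Nat.antidiagonalTuple (k+1) q.2).image
            (fun y : Fin (k+1) → ℕ => (Fin.cons q.1 y : Fin (k+2) → ℕ))) := by
      intro p hp q hq hpq
      refine Finset.disjoint_left.mpr fun x hx1 hx2 => hpq ?_
      rw [Finset.mem_image] at hx1 hx2
      obtain ⟨y, hy, rfl⟩ := hx1
      obtain ⟨z, hz, hzx⟩ := hx2
      rw [Finset.Nat.mem_antidiagonalTuple] at hy hz
      have h0 : q.1 = p.1 := by
        have := congrFun hzx 0
        simpa using this
      have htail : z = y := by
        funext i
        have := congrFun hzx i.succ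
        simpa using this
      subst htail
      have h2 : p.2 = q.2 := by rw [← hy, ← hz]
      exact Prod.ext h0.symm h2
    rw [aT_succ_succ (k+1) n, Finset.card_biUnion hdisj]
    have h1 : ∀ p ∈ Finset.HasAntidiagonal.antidiagonal n,
        ((Finset.Nat.antidiagonalTuple (k+1) p.2).image
          (fun y : Fin (k+1) → ℕ => (Fin.cons p.1 y : Fin (k+2) → ℕ))).card
          = (p.2 + k).choose k := by
      intro p _
      rw [Finset.card_image_of_injective _
        (Fin.cons_right_injective (α := fun _ : Fin (k+2) => ℕ) p.1), ih]
    rw [Finset.sum_congr rfl h1, Finset.Nat.sum_antidiagonal_eq_sum_range_succ_mk]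
    have h2 : ∑ i ∈ Finset.range (n+1), ((n - i) + k).choose k
        = ∑ i ∈ Finset.range (n+1), (i + k).choose k := by
      rw [← Finset.sum_range_reflect]
      refine Finset.sum_congr rfl fun i hi => ?_
      rw [Finset.mem_range] at hi
      congr 2
      omega
    rw [h2, Nat.sum_range_add_choose]
    rfl

private lemma sum_set_eq (N j : ℕ) :
    {v : Fin (N+1) → ℕ | ∑ i, v i = j} = ↑(Finset.Nat.antidiagonalTuple (N+1) j) := by
  ext v; simp [Finset.Nat.mem_antidiagonalTuple]

private lemma sum_set_finite (N j : ℕ) : {v : Fin (N+1) → ℕ | ∑ i, v i = j}.Finite := by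
  rw [sum_set_eq]
  exact (Finset.Nat.antidiagonalTuple (N+1) j).finite_toSet

private lemma card_sum_set (N j : ℕ) :
    {v : Fin (N+1) → ℕ | ∑ i, v i = j}.ncard = (j + N).choose N := by
  rw [sum_set_eq, Set.ncard_coe_finset, card_aT]

/-! auxiliary: the doubling maps and weighted sums -/

private def ff (n b d : ℕ) (v : Fin (n+1) → ℕ) : Fin (n+1) → ℕ :=
  fun i => if (i : ℕ) = 0 then 2 * v i + b else if (i : ℕ) = n then 2 * v i + d else v i

private lemma ff_inj (n b d : ℕ) : Function.Injective (ff n b d) := by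
  intro a c h
  funext i
  have := congrFun h i
  unfold ff at this
  split_ifs at this <;> omega

private lemma sum_split (n : ℕ) (hn : 1 ≤ n) (F : Fin (n+1) → ℕ)
    (hF : ∀ i : Fin (n+1), (i:ℕ) ≠ 0 → (i:ℕ) ≠ n → F i = 0) :
    ∑ i, F i = F ⟨0, Nat.succ_pos n⟩ + F ⟨n, Nat.lt_succ_self n⟩ := by
  have hne : (⟨0, Nat.succ_pos n⟩ : Fin (n+1)) ≠ ⟨n, Nat.lt_succ_self n⟩ := by
    simp only [ne_eq, Fin.mk.injEq]
    omega
  rw [← Finset.sum_subset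
    (Finset.subset_univ ({⟨0, Nat.succ_pos n⟩, ⟨n, Nat.lt_succ_self n⟩} : Finset (Fin (n+1))))
    ?_, Finset.sum_pair hne]
  intro x _ hx
  simp only [Finset.mem_insert, Finset.mem_singleton] at hx
  push_neg at hx
  exact hF x (fun h => hx.1 (Fin.ext h)) (fun h => hx.2 (Fin.ext h))

private lemma sum_ff (n : ℕ) (hn : 1 ≤ n) (b d : ℕ) (v : Fin (n+1) → ℕ) :
    ∑ i : Fin (n+1), (if (i : ℕ) = 0 ∨ (i : ℕ) = n then 1 else 2) * ff n b d v i
      = 2 * ∑ i, v i + (b + d) := by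
  have key : ∀ i : Fin (n+1),
      (if (i : ℕ) = 0 ∨ (i : ℕ) = n then 1 else 2) * ff n b d v i
        = 2 * v i + (if (i : ℕ) = 0 then b else if (i : ℕ) = n then d else 0) := by
    intro i
    unfold ff
    by_cases h0 : (i:ℕ) = 0 <;> by_cases h1 : (i:ℕ) = n <;>
      simp [h0, h1, show n ≠ 0 by omega] <;> omega
  have hsplit := sum_split n hn
    (fun i : Fin (n+1) => if (i : ℕ) = 0 then b else if (i : ℕ) = n then d else 0)
    (by intro i h0 h1; simp [h0, h1])
  rw [Finset.sum_congr rfl fun i _ => key i, Finset.sum_add_distrib, ← Finset.mul_sum, hsplit]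
  simp [show n ≠ 0 by omega]

private lemma two_sum (n : ℕ) (hn : 1 ≤ n) (u : Fin (n+1) → ℕ) :
    2 * ∑ i, u i
      = (∑ i : Fin (n+1), (if (i : ℕ) = 0 ∨ (i : ℕ) = n then 1 else 2) * u i)
        + (u ⟨0, Nat.succ_pos n⟩ + u ⟨n, Nat.lt_succ_self n⟩) := by
  have key : ∀ i : Fin (n+1), 2 * u i
      = (if (i : ℕ) = 0 ∨ (i : ℕ) = n then 1 else 2) * u i
        + (if (i : ℕ) = 0 ∨ (i : ℕ) = n then u i else 0) := by
    intro i
    by_cases h : (i:ℕ) = 0 ∨ (i:ℕ) = n <;> simp only [h, ↓reduceIte] <;> ring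
  have hsplit := sum_split n hn
    (fun i : Fin (n+1) => if (i : ℕ) = 0 ∨ (i : ℕ) = n then u i else 0)
    (by intro i h0 h1; simp [h0, h1])
  rw [Finset.mul_sum, Finset.sum_congr rfl fun i _ => key i, Finset.sum_add_distrib, hsplit]
  simp

/-! the parity decomposition -/

private lemma decomp (n : ℕ) (hn : 1 ≤ n) (b d j : ℕ) (hb : b < 2) (hd : d < 2) :
    {u : Fin (n+1) → ℕ |
        (∑ i : Fin (n+1), (if (i : ℕ) = 0 ∨ (i : ℕ) = n then 1 else 2) * u i = 2 * j + b + d)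
        ∧ u ⟨0, Nat.succ_pos n⟩ % 2 = b ∧ u ⟨n, Nat.lt_succ_self n⟩ % 2 = d}
      = ff n b d '' {v | ∑ i, v i = j} := by
  ext u
  simp only [Set.mem_setOf_eq, Set.mem_image]
  constructor
  · rintro ⟨hsum, h0, hN⟩
    have hfv : ff n b d (fun i => if (i:ℕ) = 0 ∨ (i:ℕ) = n then u i / 2 else u i) = u := by
      funext i
      show (if (i : ℕ) = 0
          then 2 * (if (i:ℕ) = 0 ∨ (i:ℕ) = n then u i / 2 else u i) + b
          else if (i : ℕ) = n
            then 2 * (if (i:ℕ) = 0 ∨ (i:ℕ) = n then u i / 2 else u i) + d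
            else (if (i:ℕ) = 0 ∨ (i:ℕ) = n then u i / 2 else u i)) = u i
      by_cases h0' : (i:ℕ) = 0
      · rw [if_pos h0', if_pos (Or.inl h0')]
        have hb2 : u i % 2 = b := by
          rw [show i = ⟨0, Nat.succ_pos n⟩ from Fin.ext h0']
          exact h0
        omega
      · by_cases h1' : (i:ℕ) = n
        · rw [if_neg h0', if_pos h1', if_pos (Or.inr h1')]
          have hd2 : u i % 2 = d := by
            rw [show i = ⟨n, Nat.lt_succ_self n⟩ from Fin.ext h1']
            exact hN
          omega
        · rw [if_neg h0', if_neg h1', if_neg (by tauto)]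
    refine ⟨fun i => if (i:ℕ) = 0 ∨ (i:ℕ) = n then u i / 2 else u i, ?_, hfv⟩
    have hs := sum_ff n hn b d (fun i => if (i:ℕ) = 0 ∨ (i:ℕ) = n then u i / 2 else u i)
    rw [hfv, hsum] at hs
    show ∑ i : Fin (n+1), (if (i:ℕ) = 0 ∨ (i:ℕ) = n then u i / 2 else u i) = j
    omega
  · rintro ⟨v, hv, rfl⟩
    have hs := sum_ff n hn b d v
    have hv' : ∑ i : Fin (n+1), v i = j := hv
    refine ⟨by rw [hs, hv']; ring, ?_, ?_⟩
    · show (if ((⟨0, Nat.succ_pos n⟩ : Fin (n+1)) : ℕ) = 0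
          then 2 * v ⟨0, Nat.succ_pos n⟩ + b
          else if ((⟨0, Nat.succ_pos n⟩ : Fin (n+1)) : ℕ) = n
            then 2 * v ⟨0, Nat.succ_pos n⟩ + d else v ⟨0, Nat.succ_pos n⟩) % 2 = b
      rw [if_pos rfl]
      omega
    · show (if ((⟨n, Nat.lt_succ_self n⟩ : Fin (n+1)) : ℕ) = 0
          then 2 * v ⟨n, Nat.lt_succ_self n⟩ + b
          else if ((⟨n, Nat.lt_succ_self n⟩ : Fin (n+1)) : ℕ) = n
            then 2 * v ⟨n, Nat.lt_succ_self n⟩ + d else v ⟨n, Nat.lt_succ_self n⟩) % 2 = d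
      rw [if_neg (show ¬ (n = 0) by omega), if_pos rfl]
      omega

private lemma ncard_parity (n : ℕ) (hn : 1 ≤ n) (b d j : ℕ) (hb : b < 2) (hd : d < 2) :
    {u : Fin (n+1) → ℕ |
        (∑ i : Fin (n+1), (if (i : ℕ) = 0 ∨ (i : ℕ) = n then 1 else 2) * u i = 2 * j + b + d)
        ∧ u ⟨0, Nat.succ_pos n⟩ % 2 = b ∧ u ⟨n, Nat.lt_succ_self n⟩ % 2 = d}.ncard
      = (j + n).choose n := by
  rw [decomp n hn b d j hb hd, Set.ncard_image_of_injective _ (ff_inj n b d), card_sum_set]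

private lemma finite_parity (n : ℕ) (hn : 1 ≤ n) (b d j : ℕ) (hb : b < 2) (hd : d < 2) :
    {u : Fin (n+1) → ℕ |
        (∑ i : Fin (n+1), (if (i : ℕ) = 0 ∨ (i : ℕ) = n then 1 else 2) * u i = 2 * j + b + d)
        ∧ u ⟨0, Nat.succ_pos n⟩ % 2 = b ∧ u ⟨n, Nat.lt_succ_self n⟩ % 2 = d}.Finite := by
  rw [decomp n hn b d j hb hd]
  exact (sum_set_finite n j).image _

/-! reduction from ℤ-valued to ℕ-valued tuples -/

private lemma ncard_int (n c : ℕ) :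
    {u : Fin (n+1) → ℤ | (∀ i : Fin (n+1), 0 ≤ u i) ∧
        ∑ i : Fin (n+1), (if (i : ℕ) = 0 ∨ (i : ℕ) = n then 1 else 2) * u i = (c : ℤ)}.ncard
      = {v : Fin (n+1) → ℕ |
          ∑ i : Fin (n+1), (if (i : ℕ) = 0 ∨ (i : ℕ) = n then 1 else 2) * v i = c}.ncard := by
  have hinj : Function.Injective (fun (v : Fin (n+1) → ℕ) => (fun i => (v i : ℤ))) := by
    intro a b h
    funext i
    have h2 : ((a i : ℤ)) = (b i : ℤ) := congrFun h i
    exact_mod_cast h2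
  have hcast : ∀ v : Fin (n+1) → ℕ,
      ∑ i : Fin (n+1), (if (i : ℕ) = 0 ∨ (i : ℕ) = n then (1:ℤ) else 2) * ((v i : ℕ) : ℤ)
        = ((∑ i : Fin (n+1), (if (i : ℕ) = 0 ∨ (i : ℕ) = n then 1 else 2) * v i : ℕ) : ℤ) := by
    intro v
    rw [Nat.cast_sum]
    refine Finset.sum_congr rfl fun i _ => ?_
    rw [Nat.cast_mul, apply_ite (Nat.cast : ℕ → ℤ)]
    norm_num
  have himg : {u : Fin (n+1) → ℤ | (∀ i : Fin (n+1), 0 ≤ u i) ∧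
        ∑ i : Fin (n+1), (if (i : ℕ) = 0 ∨ (i : ℕ) = n then 1 else 2) * u i = (c : ℤ)}
      = (fun (v : Fin (n+1) → ℕ) => (fun i => (v i : ℤ))) ''
        {v : Fin (n+1) → ℕ |
          ∑ i : Fin (n+1), (if (i : ℕ) = 0 ∨ (i : ℕ) = n then 1 else 2) * v i = c} := by
    ext u
    simp only [Set.mem_image, Set.mem_setOf_eq]
    constructor
    · rintro ⟨hpos, hsum⟩
      refine ⟨fun i => (u i).toNat, ?_, ?_⟩
      · have h2 : ((∑ i : Fin (n+1),
            (if (i : ℕ) = 0 ∨ (i : ℕ) = n then 1 else 2) * (u i).toNat : ℕ) : ℤ) = (c : ℤ) := by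
          rw [← hcast]
          refine Eq.trans ?_ hsum
          refine Finset.sum_congr rfl fun i _ => ?_
          rw [Int.toNat_of_nonneg (hpos i)]
        exact_mod_cast h2
      · funext i
        simp [Int.toNat_of_nonneg (hpos i)]
    · rintro ⟨v, hv, rfl⟩
      exact ⟨fun i => Int.natCast_nonneg _, by rw [hcast v, hv]⟩
  rw [himg, Set.ncard_image_of_injective _ hinj]



/-- For integers `n ≥ 1` and `k ≥ 0`, the number of tuples
`(u_0, …, u_n)` of nonnegative integers with `u_0 + 2u_1 + ⋯ + 2u_{n-1} + u_n = 2k`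
equals `C(n+k, n) + C(n+k-1, n)`, and the number of such tuples with the sum equal
to `2k+1` equals `2·C(n+k, n)`. -/
theorem stmt_14 (n : ℕ) (hn : 1 ≤ n) (k : ℕ) :
    ({u : Fin (n + 1) → ℤ | (∀ i : Fin (n + 1), 0 ≤ u i) ∧
        ∑ i : Fin (n + 1),
          (if (i : ℕ) = 0 ∨ (i : ℕ) = n then 1 else 2) * u i = 2 * (k : ℤ)}.ncard =
      (n + k).choose n + (n + k - 1).choose n) ∧
    ({u : Fin (n + 1) → ℤ | (∀ i : Fin (n + 1), 0 ≤ u i) ∧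
        ∑ i : Fin (n + 1),
          (if (i : ℕ) = 0 ∨ (i : ℕ) = n then 1 else 2) * u i = 2 * (k : ℤ) + 1}.ncard =
      2 * (n + k).choose n) := by
  constructor
  · -- even case
    rw [show (2 * (k : ℤ)) = ((2 * k : ℕ) : ℤ) by push_cast; ring, ncard_int n (2 * k)]
    rcases k with _ | k'
    · -- k = 0
      have hset : {v : Fin (n+1) → ℕ |
          ∑ i : Fin (n+1), (if (i : ℕ) = 0 ∨ (i : ℕ) = n then 1 else 2) * v i = 2 * 0}
          = {(fun _ => 0 : Fin (n+1) → ℕ)} := by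
        ext v
        simp only [Set.mem_setOf_eq, Set.mem_singleton_iff]
        constructor
        · intro h
          rw [Nat.mul_zero] at h
          funext i
          have ht := (Finset.sum_eq_zero_iff.mp h) i (Finset.mem_univ i)
          by_cases hc : (i:ℕ) = 0 ∨ (i:ℕ) = n
          · rw [if_pos hc] at ht; omega
          · rw [if_neg hc] at ht; omega
        · intro h
          subst h
          simp
      rw [hset, Set.ncard_singleton]
      rw [Nat.add_zero, Nat.choose_self, Nat.choose_eq_zero_of_lt (by omega)]
    · -- k = k' + 1
      have hU : {v : Fin (n+1) → ℕ |
          ∑ i : Fin (n+1), (if (i : ℕ) = 0 ∨ (i : ℕ) = n then 1 else 2) * v i = 2 * (k'+1)}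
          = {u : Fin (n+1) → ℕ |
              (∑ i : Fin (n+1), (if (i : ℕ) = 0 ∨ (i : ℕ) = n then 1 else 2) * u i
                = 2 * (k'+1) + 0 + 0)
              ∧ u ⟨0, Nat.succ_pos n⟩ % 2 = 0 ∧ u ⟨n, Nat.lt_succ_self n⟩ % 2 = 0}
            ∪ {u : Fin (n+1) → ℕ |
              (∑ i : Fin (n+1), (if (i : ℕ) = 0 ∨ (i : ℕ) = n then 1 else 2) * u i
                = 2 * k' + 1 + 1)
              ∧ u ⟨0, Nat.succ_pos n⟩ % 2 = 1 ∧ u ⟨n, Nat.lt_succ_self n⟩ % 2 = 1} := by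
        ext u
        simp only [Set.mem_setOf_eq, Set.mem_union]
        constructor
        · intro hu
          have h2 := two_sum n hn u
          rw [hu] at h2
          by_cases hpar : u ⟨0, Nat.succ_pos n⟩ % 2 = 0
          · exact Or.inl ⟨by omega, hpar, by omega⟩
          · exact Or.inr ⟨by omega, by omega, by omega⟩
        · rintro (⟨h, -, -⟩ | ⟨h, -, -⟩) <;> omega
      rw [hU, Set.ncard_union_eq ?_ (finite_parity n hn 0 0 (k'+1) (by omega) (by omega))
          (finite_parity n hn 1 1 k' (by omega) (by omega)),
        ncard_parity n hn 0 0 (k'+1) (by omega) (by omega),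
        ncard_parity n hn 1 1 k' (by omega) (by omega)]
      · rw [show k' + 1 + n = n + (k'+1) by omega, show k' + n = n + (k'+1) - 1 by omega]
      · refine Set.disjoint_left.mpr fun u hu1 hu2 => ?_
        obtain ⟨-, h1, -⟩ := hu1
        obtain ⟨-, h2, -⟩ := hu2
        omega
  · -- odd case
    rw [show (2 * (k : ℤ) + 1) = ((2 * k + 1 : ℕ) : ℤ) by push_cast; ring,
      ncard_int n (2 * k + 1)]
    have hU : {v : Fin (n+1) → ℕ |
        ∑ i : Fin (n+1), (if (i : ℕ) = 0 ∨ (i : ℕ) = n then 1 else 2) * v i = 2 * k + 1}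
        = {u : Fin (n+1) → ℕ |
            (∑ i : Fin (n+1), (if (i : ℕ) = 0 ∨ (i : ℕ) = n then 1 else 2) * u i
              = 2 * k + 0 + 1)
            ∧ u ⟨0, Nat.succ_pos n⟩ % 2 = 0 ∧ u ⟨n, Nat.lt_succ_self n⟩ % 2 = 1}
          ∪ {u : Fin (n+1) → ℕ |
            (∑ i : Fin (n+1), (if (i : ℕ) = 0 ∨ (i : ℕ) = n then 1 else 2) * u i
              = 2 * k + 1 + 0)
            ∧ u ⟨0, Nat.succ_pos n⟩ % 2 = 1 ∧ u ⟨n, Nat.lt_succ_self n⟩ % 2 = 0} := by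
      ext u
      simp only [Set.mem_setOf_eq, Set.mem_union]
      constructor
      · intro hu
        have h2 := two_sum n hn u
        rw [hu] at h2
        by_cases hpar : u ⟨0, Nat.succ_pos n⟩ % 2 = 0
        · exact Or.inl ⟨by omega, hpar, by omega⟩
        · exact Or.inr ⟨by omega, by omega, by omega⟩
      · rintro (⟨h, -, -⟩ | ⟨h, -, -⟩) <;> omega
    rw [hU, Set.ncard_union_eq ?_ (finite_parity n hn 0 1 k (by omega) (by omega))
        (finite_parity n hn 1 0 k (by omega) (by omega)),
      ncard_parity n hn 0 1 k (by omega) (by omega),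
      ncard_parity n hn 1 0 k (by omega) (by omega)]
    · rw [show k + n = n + k by omega]
      ring
    · refine Set.disjoint_left.mpr fun u hu1 hu2 => ?_
      obtain ⟨-, h1, -⟩ := hu1
      obtain ⟨-, h2, -⟩ := hu2
      omega
end

section
/- Let V be a finite-dimensional real inner product space, W a finite group of linear isometries of V, σ : W → {+1, −1} a group homomorphism, and M ≥ 1 an integer; for b ∈ V define φ^σ_b : V → ℂ by φ^σ_b(a) = Σ_{w ∈ W} σ(w)·exp(2πi⟨w·b, a⟩). Let Q∨ ⊆ P∨ be W-invariant additive subgroups of V, let P be an additive subgroup of V with ⟨λ, q⟩ ∈ ℤ for all λ ∈ P and q ∈ Q∨, and set Q = {v ∈ V : ⟨v, p⟩ ∈ ℤ for all p ∈ P∨}. Let ρ ∈ V satisfy ρ − w·ρ ∈ P for all w ∈ W, let ρ∨ ∈ V satisfy ρ∨ − w·ρ∨ ∈ P∨ for all w ∈ W, and let b, b' ∈ ρ + P. Let Y be a finite subset of V such that y ↦ y + Q∨ is a bijection from Y onto the set of cosets {v + Q∨ : v ∈ V, M·v − ρ∨ ∈ P∨}. Then Σ_{y ∈ Y} φ^σ_b(y)·conj(φ^σ_{b'}(y))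 = |W|·|Y|·Σ_{w ∈ W, b − w·b' ∈ M·Q} σ(w)·exp(2πi⟨b − w·b', ρ∨⟩/M). -/
open scoped Classical

/-! ### Auxiliary lemmas about the character `ee r = exp(2πi r)` -/

noncomputable def ee (r : ℝ) : ℂ := Complex.exp (2 * Real.pi * Complex.I * (r : ℂ))

lemma ee_add (r s : ℝ) : ee (r + s) = ee r * ee s := by
  rw [ee, ee, ee, ← Complex.exp_add]; push_cast; ring_nf

lemma ee_int (m : ℤ) : ee (m : ℝ) = 1 := by
  rw [ee]
  have := Complex.exp_int_mul_two_pi_mul_I m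
  rw [← this]; congr 1; push_cast; ring

lemma ee_sub_int (r s : ℝ) (m : ℤ) (h : r - s = m) : ee r = ee s := by
  have : r = s + m := by linarith
  rw [this, ee_add, ee_int, mul_one]

lemma ee_conj (r : ℝ) : (starRingEnd ℂ) (ee r) = ee (-r) := by
  rw [ee, ee, ← Complex.exp_conj]
  congr 1
  simp only [map_mul, Complex.conj_I, Complex.conj_ofReal, map_ofNat, Complex.ofReal_neg]
  ring

lemma ee_ne_one (r : ℝ) (h : ∀ m : ℤ, r ≠ m) : ee r ≠ 1 := by
  rw [ee, Ne, Complex.exp_eq_one_iff]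
  rintro ⟨n, hn⟩
  apply h n
  have hI : (Complex.I : ℂ) ≠ 0 := Complex.I_ne_zero
  have hpi : (Real.pi : ℂ) ≠ 0 := by exact_mod_cast Real.pi_ne_zero
  have : (r : ℂ) = n := by
    have h2 : (2 : ℂ) ≠ 0 := two_ne_zero
    have key : (2 * (Real.pi:ℂ) * Complex.I) * r = (2 * Real.pi * Complex.I) * n := by
      rw [hn]; ring
    exact mul_left_cancel₀ (mul_ne_zero (mul_ne_zero h2 hpi) hI) key
  exact_mod_cast this

section charsum
variable {V : Type*} [NormedAddCommGroup V] [InnerProductSpace ℝ V]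
  (M : ℕ) (Qv Pv : AddSubgroup V) (ρv : V) (Y : Finset V)

lemma ee_inner_eq (c : V) (hcQ : ∀ q ∈ Qv, ∃ m : ℤ, (inner ℝ c q : ℝ) = m)
    (y y' : V) (h : (QuotientAddGroup.mk y : V ⧸ Qv) = QuotientAddGroup.mk y') :
    ee (inner ℝ c y : ℝ) = ee (inner ℝ c y' : ℝ) := by
  rw [QuotientAddGroup.eq] at h
  obtain ⟨m, hm⟩ := hcQ _ h
  refine ee_sub_int _ _ (-m) ?_
  have : (inner ℝ c (-y + y') : ℝ) = inner ℝ c y' - inner ℝ c y := by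
    rw [inner_add_right, inner_neg_right]; ring
  rw [this] at hm
  push_cast
  linarith

lemma char_sum_triv (hM : 1 ≤ M)
    (hY : Set.BijOn (fun y => (QuotientAddGroup.mk y : V ⧸ Qv)) ↑Y
      {x : V ⧸ Qv | ∃ v : V, (M : ℝ) • v - ρv ∈ Pv ∧ QuotientAddGroup.mk v = x})
    (c : V) (hcQ : ∀ q ∈ Qv, ∃ m : ℤ, (inner ℝ c q : ℝ) = m)
    (htriv : ∀ p ∈ Pv, ∃ m : ℤ, (inner ℝ c p : ℝ) = (M : ℝ) * m) :
    ∑ y ∈ Y, ee (inner ℝ c y : ℝ) = (Y.card : ℂ) * ee ((inner ℝ c ρv : ℝ) / M) := by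
  have hMne : (M : ℝ) ≠ 0 := by positivity
  rw [Finset.sum_congr rfl (fun y hy => ?_), Finset.sum_const, nsmul_eq_mul]
  obtain ⟨v, hv, hvy⟩ := hY.mapsTo hy
  rw [ee_inner_eq Qv c hcQ y v hvy.symm]
  obtain ⟨m, hm⟩ := htriv _ hv
  refine ee_sub_int _ _ m ?_
  have h1 : (inner ℝ c ((M:ℝ) • v - ρv) : ℝ) = (M:ℝ) * inner ℝ c v - inner ℝ c ρv := by
    rw [inner_sub_right, real_inner_smul_right]
  rw [h1] at hm
  field_simp
  linarith

lemma char_sum_vanish (hM : 1 ≤ M)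
    (hY : Set.BijOn (fun y => (QuotientAddGroup.mk y : V ⧸ Qv)) ↑Y
      {x : V ⧸ Qv | ∃ v : V, (M : ℝ) • v - ρv ∈ Pv ∧ QuotientAddGroup.mk v = x})
    (c : V) (hcQ : ∀ q ∈ Qv, ∃ m : ℤ, (inner ℝ c q : ℝ) = m)
    (p₀ : V) (hp₀ : p₀ ∈ Pv) (hnt : ∀ m : ℤ, (inner ℝ c p₀ : ℝ) ≠ (M : ℝ) * m) :
    ∑ y ∈ Y, ee (inner ℝ c y : ℝ) = 0 := by
  have hMne : (M : ℝ) ≠ 0 := by positivity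
  set S : Set (V ⧸ Qv) :=
    {x : V ⧸ Qv | ∃ v : V, (M : ℝ) • v - ρv ∈ Pv ∧ QuotientAddGroup.mk v = x} with hS
  set Fbar : V ⧸ Qv → ℂ := fun x => ee (inner ℝ c x.out : ℝ) with hF
  have hFbar : ∀ y : V, Fbar (QuotientAddGroup.mk y) = ee (inner ℝ c y : ℝ) := by
    intro y
    exact ee_inner_eq Qv c hcQ _ y (QuotientAddGroup.out_eq' _)
  set t : ℂ := ee ((inner ℝ c p₀ : ℝ) / M) with ht
  have htne : t ≠ 1 := by
    refine ee_ne_one _ (fun m hm => hnt m ?_)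
    field_simp at hm
    linarith
  set T : Finset (V ⧸ Qv) := Y.image (fun y => (QuotientAddGroup.mk y : V ⧸ Qv)) with hT
  have hTS : (T : Set (V ⧸ Qv)) = S := by
    rw [hT, Finset.coe_image, hY.image_eq]
  set τ : V ⧸ Qv → V ⧸ Qv := fun x => x + QuotientAddGroup.mk ((M : ℝ)⁻¹ • p₀) with hτ
  have hτinj : Function.Injective τ := add_left_injective _
  have hτS : ∀ x ∈ S, τ x ∈ S := by
    rintro x ⟨v, hv, rfl⟩
    refine ⟨v + (M : ℝ)⁻¹ • p₀, ?_, rfl⟩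
    have : (M : ℝ) • (v + (M : ℝ)⁻¹ • p₀) - ρv = ((M : ℝ) • v - ρv) + p₀ := by
      rw [smul_add, smul_inv_smul₀ hMne]; abel
    rw [this]
    exact AddSubgroup.add_mem _ hv hp₀
  have hτT : T.image τ = T := by
    apply Finset.eq_of_subset_of_card_le
    · intro x hx
      rw [Finset.mem_image] at hx
      obtain ⟨a, ha, rfl⟩ := hx
      have : τ a ∈ S := hτS a (by rw [← hTS]; exact_mod_cast ha)
      rw [← hTS] at this
      exact_mod_cast this
    · rw [Finset.card_image_of_injective _ hτinj]
  have key : ∀ x : V ⧸ Qv, Fbar (τ x) = t * Fbar x := by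
    intro x
    have hmk : τ x = QuotientAddGroup.mk (x.out + (M : ℝ)⁻¹ • p₀) := by
      rw [QuotientAddGroup.mk_add, QuotientAddGroup.out_eq']
    have : Fbar (τ x) = ee (inner ℝ c (x.out + (M : ℝ)⁻¹ • p₀) : ℝ) := by
      rw [hmk, hFbar]
    rw [this]
    have harg : (inner ℝ c (x.out + (M : ℝ)⁻¹ • p₀) : ℝ)
        = (inner ℝ c p₀ : ℝ) / M + (inner ℝ c x.out : ℝ) := by
      rw [inner_add_right, real_inner_smul_right]; field_simp; ring
    rw [harg, ee_add]
  have hsum : ∑ y ∈ Y, ee (inner ℝ c y : ℝ) = ∑ x ∈ T, Fbar x := by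
    rw [hT, Finset.sum_image (fun a ha b hb h => hY.injOn ha hb h)]
    exact Finset.sum_congr rfl (fun y _ => (hFbar y).symm)
  have hshift : ∑ x ∈ T, Fbar x = t * ∑ x ∈ T, Fbar x := by
    calc ∑ x ∈ T, Fbar x = ∑ x ∈ T.image τ, Fbar x := by rw [hτT]
    _ = ∑ x ∈ T, Fbar (τ x) := Finset.sum_image (fun a _ b _ h => hτinj h)
    _ = ∑ x ∈ T, t * Fbar x := Finset.sum_congr rfl (fun x _ => key x)
    _ = t * ∑ x ∈ T, Fbar x := (Finset.mul_sum _ _ _).symm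
  rw [hsum]
  have hz : (t - 1) * ∑ x ∈ T, Fbar x = 0 := by
    rw [sub_mul, one_mul, ← hshift, sub_self]
  rcases mul_eq_zero.mp hz with h | h
  · exact absurd (sub_eq_zero.mp h) htne
  · exact h

end charsum
/-- the central identity in the proof of discrete orthogonality of orbit
functions: with `Q∨ ⊆ P∨` `W`-invariant lattices, `P` ℤ-dual to `Q∨`,
`Q = {v | ⟪v, p⟫ ∈ ℤ ∀ p ∈ P∨}`, admissible shifts `ρ`, `ρ∨`, labels `b, b' ∈ ρ + P`
and `Y` a transversal of the shifted grid `(1/M)(ρ∨ + P∨)/Q∨`, one has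
`Σ_{y ∈ Y} φ^σ_b(y) conj(φ^σ_{b'}(y))
  = |W|·|Y|·Σ_{w ∈ W, b - w b' ∈ MQ} σ(w) exp(2πi⟪b - w b', ρ∨⟫/M)`. -/
theorem stmt_16 {V : Type*} [NormedAddCommGroup V] [InnerProductSpace ℝ V]
    [FiniteDimensional ℝ V]
    (W : Subgroup (V ≃ₗᵢ[ℝ] V)) [Fintype W] (σ : W →* ℤˣ) (M : ℕ) (hM : 1 ≤ M)
    (Qv Pv : AddSubgroup V) (hQvPv : Qv ≤ Pv)
    (hQvW : ∀ w : W, ∀ q ∈ Qv, (w : V ≃ₗᵢ[ℝ] V) q ∈ Qv)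
    (hPvW : ∀ w : W, ∀ p ∈ Pv, (w : V ≃ₗᵢ[ℝ] V) p ∈ Pv)
    (P : AddSubgroup V) (hdual : ∀ l ∈ P, ∀ q ∈ Qv, ∃ m : ℤ, (inner ℝ l q : ℝ) = m)
    (Q : Set V) (hQ : Q = {v : V | ∀ p ∈ Pv, ∃ m : ℤ, (inner ℝ v p : ℝ) = m})
    (ρ : V) (hρ : ∀ w : W, ρ - (w : V ≃ₗᵢ[ℝ] V) ρ ∈ P)
    (ρv : V) (hρv : ∀ w : W, ρv - (w : V ≃ₗᵢ[ℝ] V) ρv ∈ Pv)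
    (b b' : V) (hb : b - ρ ∈ P) (hb' : b' - ρ ∈ P)
    (Y : Finset V)
    (hY : Set.BijOn (fun y => (QuotientAddGroup.mk y : V ⧸ Qv)) ↑Y
      {x : V ⧸ Qv | ∃ v : V, (M : ℝ) • v - ρv ∈ Pv ∧ QuotientAddGroup.mk v = x}) :
    ∑ y ∈ Y, orbitFn W σ b y * (starRingEnd ℂ) (orbitFn W σ b' y) =
      (Fintype.card W : ℂ) * (Y.card : ℂ) *
        ∑ w : W,
          if ∃ q ∈ Q, b - (w : V ≃ₗᵢ[ℝ] V) b' = (M : ℝ) • q then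
            ((σ w : ℤ) : ℂ) * Complex.exp (2 * Real.pi * Complex.I *
              (((inner ℝ (b - (w : V ≃ₗᵢ[ℝ] V) b') ρv : ℝ) / (M : ℝ) : ℝ) : ℂ))
          else 0 := by
  have hMne : (M : ℝ) ≠ 0 := by positivity
  -- basic facts about the W-action
  have hw_apply_inv : ∀ (w : W) (x : V),
      (w : V ≃ₗᵢ[ℝ] V) (((w⁻¹ : W) : V ≃ₗᵢ[ℝ] V) x) = x := by intro w x; simp
  have hinv_apply : ∀ (w : W) (x : V),
      ((w⁻¹ : W) : V ≃ₗᵢ[ℝ] V) ((w : V ≃ₗᵢ[ℝ] V) x) = x := by intro w x; simp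
  have hinner_w : ∀ (w : W) (x y : V),
      (inner ℝ ((w : V ≃ₗᵢ[ℝ] V) x) y : ℝ) = inner ℝ x (((w⁻¹ : W) : V ≃ₗᵢ[ℝ] V) y) := by
    intro w x y
    conv_lhs => rw [show y = (w : V ≃ₗᵢ[ℝ] V) (((w⁻¹ : W) : V ≃ₗᵢ[ℝ] V) y) from
      (hw_apply_inv w y).symm]
    rw [LinearIsometryEquiv.inner_map_map]
  have hQW : ∀ (w : W), ∀ q ∈ Q, (w : V ≃ₗᵢ[ℝ] V) q ∈ Q := by
    subst hQ
    intro w q hq p hp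
    obtain ⟨m, hm⟩ := hq _ (hPvW w⁻¹ p hp)
    exact ⟨m, by rw [hinner_w]; exact hm⟩
  -- integrality of the pair differences on Qv
  have hcQ : ∀ (w w' : W), ∀ q ∈ Qv, ∃ m : ℤ,
      (inner ℝ ((w : V ≃ₗᵢ[ℝ] V) b - (w' : V ≃ₗᵢ[ℝ] V) b') q : ℝ) = m := by
    intro w w' q hq
    have hP1 : (w : V ≃ₗᵢ[ℝ] V) ρ - (w' : V ≃ₗᵢ[ℝ] V) ρ ∈ P := by
      have h0 := P.sub_mem (hρ w') (hρ w)
      have h2 : ρ - (w' : V ≃ₗᵢ[ℝ] V) ρ - (ρ - (w : V ≃ₗᵢ[ℝ] V) ρ)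
          = (w : V ≃ₗᵢ[ℝ] V) ρ - (w' : V ≃ₗᵢ[ℝ] V) ρ := by abel
      rwa [h2] at h0
    obtain ⟨m1, hm1⟩ := hdual _ hP1 q hq
    obtain ⟨m2, hm2⟩ := hdual _ hb _ (hQvW w⁻¹ q hq)
    obtain ⟨m3, hm3⟩ := hdual _ hb' _ (hQvW w'⁻¹ q hq)
    refine ⟨m1 + m2 - m3, ?_⟩
    rw [inner_sub_left] at hm1 ⊢
    rw [inner_sub_left] at hm2 hm3
    rw [hinner_w w b, hinner_w w' b']
    rw [hinner_w w ρ, hinner_w w' ρ] at hm1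
    rw [Int.cast_sub, Int.cast_add]
    linarith
  -- the character sum over the grid, for each pair (w, w')
  have hchar : ∀ w w' : W,
      ∑ y ∈ Y, ee (inner ℝ ((w : V ≃ₗᵢ[ℝ] V) b - (w' : V ≃ₗᵢ[ℝ] V) b') y : ℝ)
        = if ∃ q ∈ Q, (w : V ≃ₗᵢ[ℝ] V) b - (w' : V ≃ₗᵢ[ℝ] V) b' = (M:ℝ) • q then
            (Y.card : ℂ) *
              ee ((inner ℝ ((w : V ≃ₗᵢ[ℝ] V) b - (w' : V ≃ₗᵢ[ℝ] V) b') ρv : ℝ) / M)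
          else 0 := by
    intro w w'
    set c := (w : V ≃ₗᵢ[ℝ] V) b - (w' : V ≃ₗᵢ[ℝ] V) b' with hc
    split_ifs with h
    · obtain ⟨q, hqQ, hcq⟩ := h
      refine char_sum_triv M Qv Pv ρv Y hM hY c (hcQ w w') ?_
      intro p hp
      rw [hQ] at hqQ
      obtain ⟨m, hm⟩ := hqQ p hp
      exact ⟨m, by rw [hcq, real_inner_smul_left, hm]⟩
    · set q0 := (M:ℝ)⁻¹ • c with hq0
      have hcsq : c = (M:ℝ) • q0 := (smul_inv_smul₀ hMne c).symm
      have hq0nQ : q0 ∉ Q := fun hmem => h ⟨q0, hmem, hcsq⟩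
      rw [hQ] at hq0nQ
      simp only [Set.mem_setOf_eq] at hq0nQ
      push_neg at hq0nQ
      obtain ⟨p₀, hp₀, hnt⟩ := hq0nQ
      refine char_sum_vanish M Qv Pv ρv Y hM hY c (hcQ w w') p₀ hp₀ ?_
      intro m hm
      refine hnt m ?_
      rw [hq0, real_inner_smul_left, hm]
      field_simp
  -- rewrite orbit functions via ee
  have orbit_eq : ∀ (x a : V), orbitFn W σ x a
      = ∑ w : W, ((σ w : ℤ) : ℂ) * ee (inner ℝ ((w : V ≃ₗᵢ[ℝ] V) x) a : ℝ) := fun x a => rfl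
  -- expand the product
  have expand : ∀ y : V, orbitFn W σ b y * (starRingEnd ℂ) (orbitFn W σ b' y)
      = ∑ w : W, ∑ w' : W, (((σ w : ℤ) : ℂ) * ((σ w' : ℤ) : ℂ)) *
          ee (inner ℝ ((w : V ≃ₗᵢ[ℝ] V) b - (w' : V ≃ₗᵢ[ℝ] V) b') y : ℝ) := by
    intro y
    rw [orbit_eq, orbit_eq, map_sum, Finset.sum_mul_sum]
    refine Finset.sum_congr rfl fun w _ => Finset.sum_congr rfl fun w' _ => ?_
    rw [map_mul, ee_conj]
    have hconjσ : (starRingEnd ℂ) ((σ w' : ℤ) : ℂ) = ((σ w' : ℤ) : ℂ) := by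
      simp
    rw [hconjσ, inner_sub_left]
    rw [show (inner ℝ ((w : V ≃ₗᵢ[ℝ] V) b) y : ℝ) - (inner ℝ ((w' : V ≃ₗᵢ[ℝ] V) b') y : ℝ)
        = (inner ℝ ((w : V ≃ₗᵢ[ℝ] V) b) y : ℝ) + (-(inner ℝ ((w' : V ≃ₗᵢ[ℝ] V) b') y : ℝ))
        from by ring, ee_add]
    ring
  -- the per-(w,u) identification with the RHS term
  have key2 : ∀ w u : W,
      (((σ w : ℤ) : ℂ) * ((σ (w * u) : ℤ) : ℂ)) *
        (if ∃ q ∈ Q, (w : V ≃ₗᵢ[ℝ] V) b - ((w * u : W) : V ≃ₗᵢ[ℝ] V) b' = (M:ℝ) • q then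
          (Y.card : ℂ) *
            ee ((inner ℝ ((w : V ≃ₗᵢ[ℝ] V) b - ((w * u : W) : V ≃ₗᵢ[ℝ] V) b') ρv : ℝ) / M)
        else 0)
      = ((σ u : ℤ) : ℂ) * ((Y.card : ℂ) *
          (if ∃ q ∈ Q, b - (u : V ≃ₗᵢ[ℝ] V) b' = (M:ℝ) • q then
            ee ((inner ℝ (b - (u : V ≃ₗᵢ[ℝ] V) b') ρv : ℝ) / M)
          else 0)) := by
    intro w u
    set d := b - (u : V ≃ₗᵢ[ℝ] V) b' with hd
    have hwd : (w : V ≃ₗᵢ[ℝ] V) b - ((w * u : W) : V ≃ₗᵢ[ℝ] V) b'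
        = (w : V ≃ₗᵢ[ℝ] V) d := by
      have h1 : ((w * u : W) : V ≃ₗᵢ[ℝ] V) b' = (w : V ≃ₗᵢ[ℝ] V) ((u : V ≃ₗᵢ[ℝ] V) b') := by
        simp
      rw [h1, hd, LinearIsometryEquiv.map_sub]
    have hσ : ((σ w : ℤ) : ℂ) * ((σ (w * u) : ℤ) : ℂ) = ((σ u : ℤ) : ℂ) := by
      rw [map_mul]
      have h1 : ((σ w : ℤ) : ℂ) * ((σ w : ℤ) : ℂ) = 1 := by
        have h0 : ((σ w : ℤ) * (σ w : ℤ) : ℤ) = 1 := by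
          rw [← Units.val_mul, Int.units_mul_self, Units.val_one]
        calc ((σ w : ℤ) : ℂ) * ((σ w : ℤ) : ℂ)
            = (((σ w : ℤ) * (σ w : ℤ) : ℤ) : ℂ) := by push_cast; ring
        _ = 1 := by rw [h0]; norm_num
      push_cast
      calc ((σ w : ℤ) : ℂ) * (((σ w : ℤ) : ℂ) * ((σ u : ℤ) : ℂ))
          = (((σ w : ℤ) : ℂ) * ((σ w : ℤ) : ℂ)) * ((σ u : ℤ) : ℂ) := by ring
      _ = ((σ u : ℤ) : ℂ) := by rw [h1, one_mul]
    have hcond : (∃ q ∈ Q, (w : V ≃ₗᵢ[ℝ] V) d = (M:ℝ) • q) ↔ (∃ q ∈ Q, d = (M:ℝ) • q) := by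
      constructor
      · rintro ⟨q, hq, he⟩
        refine ⟨((w⁻¹ : W) : V ≃ₗᵢ[ℝ] V) q, hQW w⁻¹ q hq, ?_⟩
        have h2 := congrArg ((w⁻¹ : W) : V ≃ₗᵢ[ℝ] V) he
        rwa [hinv_apply, LinearIsometryEquiv.map_smul] at h2
      · rintro ⟨q, hq, he⟩
        refine ⟨(w : V ≃ₗᵢ[ℝ] V) q, hQW w q hq, ?_⟩
        rw [he, LinearIsometryEquiv.map_smul]
    rw [hwd]
    by_cases hcase : ∃ q ∈ Q, d = (M:ℝ) • q
    · rw [if_pos (hcond.mpr hcase), if_pos hcase]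
      obtain ⟨q, hqQ, hdq⟩ := hcase
      have hexp : ee ((inner ℝ ((w : V ≃ₗᵢ[ℝ] V) d) ρv : ℝ) / M)
          = ee ((inner ℝ d ρv : ℝ) / M) := by
        rw [hQ] at hqQ
        obtain ⟨m, hm⟩ := hqQ _ (hρv w⁻¹)
        refine ee_sub_int _ _ (-m) ?_
        rw [hinner_w w d ρv]
        have h2 : (inner ℝ d (((w⁻¹ : W) : V ≃ₗᵢ[ℝ] V) ρv) : ℝ)
            = (inner ℝ d ρv : ℝ) - inner ℝ d (ρv - ((w⁻¹ : W) : V ≃ₗᵢ[ℝ] V) ρv) := by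
          rw [inner_sub_right]; ring
        rw [h2]
        have h3 : (inner ℝ d (ρv - ((w⁻¹ : W) : V ≃ₗᵢ[ℝ] V) ρv) : ℝ) = (M:ℝ) * m := by
          rw [hdq, real_inner_smul_left, hm]
        rw [h3]
        push_cast
        field_simp
        ring
      rw [hexp, hσ]
    · rw [if_neg (fun hc => hcase (hcond.mp hc)), if_neg hcase, mul_zero, mul_zero, mul_zero]
  -- assemble
  have hGsum : ∀ w : W,
      ∑ w' : W, (((σ w : ℤ) : ℂ) * ((σ w' : ℤ) : ℂ)) *
        (if ∃ q ∈ Q, (w : V ≃ₗᵢ[ℝ] V) b - (w' : V ≃ₗᵢ[ℝ] V) b' = (M:ℝ) • q then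
          (Y.card : ℂ) *
            ee ((inner ℝ ((w : V ≃ₗᵢ[ℝ] V) b - (w' : V ≃ₗᵢ[ℝ] V) b') ρv : ℝ) / M)
        else 0)
      = ∑ u : W, ((σ u : ℤ) : ℂ) * ((Y.card : ℂ) *
          (if ∃ q ∈ Q, b - (u : V ≃ₗᵢ[ℝ] V) b' = (M:ℝ) • q then
            ee ((inner ℝ (b - (u : V ≃ₗᵢ[ℝ] V) b') ρv : ℝ) / M)
          else 0)) := by
    intro w
    refine (Fintype.sum_equiv (Equiv.mulLeft w) _ _ (fun u => ?_)).symm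
    exact (key2 w u).symm
  calc ∑ y ∈ Y, orbitFn W σ b y * (starRingEnd ℂ) (orbitFn W σ b' y)
      = ∑ y ∈ Y, ∑ w : W, ∑ w' : W, (((σ w : ℤ) : ℂ) * ((σ w' : ℤ) : ℂ)) *
          ee (inner ℝ ((w : V ≃ₗᵢ[ℝ] V) b - (w' : V ≃ₗᵢ[ℝ] V) b') y : ℝ) :=
        Finset.sum_congr rfl fun y _ => expand y
    _ = ∑ w : W, ∑ w' : W, (((σ w : ℤ) : ℂ) * ((σ w' : ℤ) : ℂ)) *
          ∑ y ∈ Y, ee (inner ℝ ((w : V ≃ₗᵢ[ℝ] V) b - (w' : V ≃ₗᵢ[ℝ] V) b') y : ℝ) := by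
        rw [Finset.sum_comm]
        refine Finset.sum_congr rfl fun w _ => ?_
        rw [Finset.sum_comm]
        exact Finset.sum_congr rfl fun w' _ => (Finset.mul_sum _ _ _).symm
    _ = ∑ w : W, ∑ w' : W, (((σ w : ℤ) : ℂ) * ((σ w' : ℤ) : ℂ)) *
          (if ∃ q ∈ Q, (w : V ≃ₗᵢ[ℝ] V) b - (w' : V ≃ₗᵢ[ℝ] V) b' = (M:ℝ) • q then
            (Y.card : ℂ) *
              ee ((inner ℝ ((w : V ≃ₗᵢ[ℝ] V) b - (w' : V ≃ₗᵢ[ℝ] V) b') ρv : ℝ) / M)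
          else 0) :=
        Finset.sum_congr rfl fun w _ => Finset.sum_congr rfl fun w' _ => by rw [hchar w w']
    _ = ∑ _w : W, ∑ u : W, ((σ u : ℤ) : ℂ) * ((Y.card : ℂ) *
          (if ∃ q ∈ Q, b - (u : V ≃ₗᵢ[ℝ] V) b' = (M:ℝ) • q then
            ee ((inner ℝ (b - (u : V ≃ₗᵢ[ℝ] V) b') ρv : ℝ) / M)
          else 0)) :=
        Finset.sum_congr rfl fun w _ => hGsum w
    _ = (Fintype.card W : ℂ) * ∑ u : W, ((σ u : ℤ) : ℂ) * ((Y.card : ℂ) *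
          (if ∃ q ∈ Q, b - (u : V ≃ₗᵢ[ℝ] V) b' = (M:ℝ) • q then
            ee ((inner ℝ (b - (u : V ≃ₗᵢ[ℝ] V) b') ρv : ℝ) / M)
          else 0)) := by
        rw [Finset.sum_const, Finset.card_univ, nsmul_eq_mul]
    _ = (Fintype.card W : ℂ) * (Y.card : ℂ) *
          ∑ w : W,
            if ∃ q ∈ Q, b - (w : V ≃ₗᵢ[ℝ] V) b' = (M : ℝ) • q then
              ((σ w : ℤ) : ℂ) * Complex.exp (2 * Real.pi * Complex.I *
                (((inner ℝ (b - (w : V ≃ₗᵢ[ℝ] V) b') ρv : ℝ) / (M : ℝ) : ℝ) : ℂ))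
            else 0 := by
        have hterm : ∀ u : W, ((σ u : ℤ) : ℂ) * ((Y.card : ℂ) *
            (if ∃ q ∈ Q, b - (u : V ≃ₗᵢ[ℝ] V) b' = (M:ℝ) • q then
              ee ((inner ℝ (b - (u : V ≃ₗᵢ[ℝ] V) b') ρv : ℝ) / M)
            else 0))
            = (Y.card : ℂ) *
              (if ∃ q ∈ Q, b - (u : V ≃ₗᵢ[ℝ] V) b' = (M : ℝ) • q then
                ((σ u : ℤ) : ℂ) * Complex.exp (2 * Real.pi * Complex.I *
                  (((inner ℝ (b - (u : V ≃ₗᵢ[ℝ] V) b') ρv : ℝ) / (M : ℝ) : ℝ) : ℂ))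
              else 0) := by
          intro u
          split_ifs with h
          · have hee : ee ((inner ℝ (b - (u : V ≃ₗᵢ[ℝ] V) b') ρv : ℝ) / M)
                = Complex.exp (2 * Real.pi * Complex.I *
                  (((inner ℝ (b - (u : V ≃ₗᵢ[ℝ] V) b') ρv : ℝ) / (M : ℝ) : ℝ) : ℂ)) := rfl
            rw [hee]; ring
          · simp
        rw [Finset.sum_congr rfl (fun u _ => hterm u), ← Finset.mul_sum, ← mul_assoc]
end

section
/- Let V be a finite-dimensional real inner product space, W a finite group of linear isometries of V, σ : W → {+1, −1} a group homomorphism, and M ≥ 1 an integer; for b ∈ V define φ^σ_b : V → ℂ by φ^σ_b(a) = Σ_{w ∈ W} σ(w)·exp(2πi⟨w·b, a⟩). Let Q∨ ⊆ P∨ be W-invariant additive subgroups of V, let P be an additive subgroup of V with ⟨λ, q⟩ ∈ ℤ for all λ ∈ P and q ∈ Q∨, and set Q = {v ∈ V : ⟨v, p⟩ ∈ ℤ for all p ∈ P∨}. Let ρ ∈ V satisfy ρ − w·ρ ∈ P for all w ∈ W, let ρ∨ ∈ V satisfy ρ∨ − w·ρ∨ ∈ P∨ for all w ∈ W, and let b,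 b' ∈ ρ + P. Let Y be a finite subset of V such that y ↦ y + Q∨ is a bijection from Y onto the set of cosets {v + Q∨ : v ∈ V, M·v − ρ∨ ∈ P∨}. If b − w·b' ∉ M·Q for every w ∈ W, then Σ_{y ∈ Y} φ^σ_b(y)·conj(φ^σ_{b'}(y)) = 0. -/
open Complex Finset

private lemma exp_add_int' (a : ℝ) (m : ℤ) :
    Complex.exp (2 * Real.pi * Complex.I * ((a + m : ℝ) : ℂ)) =
      Complex.exp (2 * Real.pi * Complex.I * (a : ℂ)) := by
  push_cast
  rw [mul_add, Complex.exp_add,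
    show (2 * (Real.pi : ℂ) * Complex.I * (m : ℂ)) = (m : ℂ) * (2 * Real.pi * Complex.I) by ring,
    Complex.exp_int_mul_two_pi_mul_I, mul_one]

private lemma exp_ne_one_of_not_int (r : ℝ) (h : ¬∃ m : ℤ, r = m) :
    Complex.exp (2 * Real.pi * Complex.I * (r : ℂ)) ≠ 1 := by
  intro hc
  rw [Complex.exp_eq_one_iff] at hc
  obtain ⟨n, hn⟩ := hc
  refine h ⟨n, ?_⟩
  have h2 : (2 * (Real.pi : ℂ) * Complex.I : ℂ) ≠ 0 := by
    simp [Real.pi_ne_zero, Complex.I_ne_zero]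
  have : (r : ℂ) = (n : ℂ) := by
    apply mul_left_cancel₀ h2
    rw [hn]; ring
  exact_mod_cast this

private lemma keysum {V : Type*} [NormedAddCommGroup V] [InnerProductSpace ℝ V]
    (Qv Pv : AddSubgroup V) (M : ℕ) (hM : 1 ≤ M) (ρv : V)
    (Y : Finset V)
    (hY : Set.BijOn (fun y => (QuotientAddGroup.mk y : V ⧸ Qv)) ↑Y
      {x : V ⧸ Qv | ∃ v : V, (M : ℝ) • v - ρv ∈ Pv ∧ QuotientAddGroup.mk v = x})
    (c : V)
    (hper : ∀ q ∈ Qv, ∃ m : ℤ, (inner ℝ c q : ℝ) = m)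
    (p : V) (hp : p ∈ Pv) (hnt : ¬∃ m : ℤ, (inner ℝ c p : ℝ) = M * m) :
    ∑ y ∈ Y, Complex.exp (2 * Real.pi * Complex.I * ((inner ℝ c y : ℝ) : ℂ)) = 0 := by
  have hM0 : (M : ℝ) ≠ 0 := by positivity
  set f : V → ℂ := fun y => Complex.exp (2 * Real.pi * Complex.I * ((inner ℝ c y : ℝ) : ℂ)) with hf
  set p₀ : V := (M : ℝ)⁻¹ • p with hp₀
  have hMp : (M : ℝ) • p₀ = p := by rw [hp₀, smul_smul, mul_inv_cancel₀ hM0, one_smul]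
  -- periodicity of f mod Qv
  have hfper : ∀ z q, q ∈ Qv → f (z + q) = f z := by
    intro z q hq
    obtain ⟨m, hm⟩ := hper q hq
    simp only [hf]
    rw [inner_add_right, hm, exp_add_int']
  -- shifting stays in the coset class
  have hshift : ∀ t : V, (M : ℝ) • t ∈ Pv → ∀ y ∈ Y, ∃ y' ∈ Y,
      (QuotientAddGroup.mk y' : V ⧸ Qv) = QuotientAddGroup.mk (y + t) := by
    intro t ht y hy
    obtain ⟨v, hv1, hv2⟩ := hY.mapsTo hy
    have hmem : (QuotientAddGroup.mk (y + t) : V ⧸ Qv) ∈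
        {x : V ⧸ Qv | ∃ v : V, (M : ℝ) • v - ρv ∈ Pv ∧ QuotientAddGroup.mk v = x} := by
      refine ⟨v + t, ?_, ?_⟩
      · have : (M : ℝ) • (v + t) - ρv = ((M : ℝ) • v - ρv) + (M : ℝ) • t := by
          rw [smul_add]; abel
        rw [this]; exact add_mem hv1 ht
      · rw [QuotientAddGroup.mk_add, QuotientAddGroup.mk_add, hv2]
    obtain ⟨y', hy', h⟩ := hY.surjOn hmem
    exact ⟨y', hy', h⟩
  have hτ : ∀ y ∈ Y, ∃ y' ∈ Y,
      (QuotientAddGroup.mk y' : V ⧸ Qv) = QuotientAddGroup.mk (y + p₀) :=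
    hshift p₀ (by rw [hMp]; exact hp)
  have hτ' : ∀ y ∈ Y, ∃ y' ∈ Y,
      (QuotientAddGroup.mk y' : V ⧸ Qv) = QuotientAddGroup.mk (y + (-p₀)) :=
    hshift (-p₀) (by rw [smul_neg, hMp]; exact neg_mem hp)
  -- the reindexing bijection
  have step1 : ∑ y ∈ Y, f (y + p₀) = ∑ y ∈ Y, f y := by
    refine Finset.sum_bij (fun a ha => (hτ a ha).choose) ?_ ?_ ?_ ?_
    · intro a ha; exact (hτ a ha).choose_spec.1
    · intro a₁ ha₁ a₂ ha₂ h
      have e1 := (hτ a₁ ha₁).choose_spec.2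
      have e2 := (hτ a₂ ha₂).choose_spec.2
      rw [h, e2] at e1
      have : (QuotientAddGroup.mk a₁ : V ⧸ Qv) = QuotientAddGroup.mk a₂ := by
        have := e1.symm
        rw [QuotientAddGroup.mk_add, QuotientAddGroup.mk_add] at this
        exact add_right_cancel this
      exact hY.injOn ha₁ ha₂ this
    · intro z hz
      obtain ⟨a, ha, hae⟩ := hτ' z hz
      refine ⟨a, ha, ?_⟩
      have e1 := (hτ a ha).choose_spec.2
      have : (QuotientAddGroup.mk ((hτ a ha).choose) : V ⧸ Qv) = QuotientAddGroup.mk z :=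
        calc (QuotientAddGroup.mk ((hτ a ha).choose) : V ⧸ Qv)
            = QuotientAddGroup.mk (a + p₀) := e1
          _ = QuotientAddGroup.mk a + QuotientAddGroup.mk p₀ := QuotientAddGroup.mk_add _ _ _
          _ = QuotientAddGroup.mk (z + -p₀) + QuotientAddGroup.mk p₀ := by rw [hae]
          _ = QuotientAddGroup.mk ((z + -p₀) + p₀) := (QuotientAddGroup.mk_add _ _ _).symm
          _ = QuotientAddGroup.mk z := by congr 1; abel
      exact hY.injOn ((hτ a ha).choose_spec.1) hz this
    · intro a ha
      have e1 := (hτ a ha).choose_spec.2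
      have hq : (hτ a ha).choose - (a + p₀) ∈ Qv := QuotientAddGroup.eq_iff_sub_mem.mp e1
      have e2 : (hτ a ha).choose = (a + p₀) + ((hτ a ha).choose - (a + p₀)) := by abel
      rw [e2, hfper _ _ hq]
  -- the multiplier
  set χ : ℂ := Complex.exp (2 * Real.pi * Complex.I * (((inner ℝ c p : ℝ) / M : ℝ) : ℂ)) with hχ
  have hkey : ∀ y : V, f (y + p₀) = χ * f y := by
    intro y
    simp only [hf, hχ]
    rw [inner_add_right, real_inner_smul_right]
    rw [← Complex.exp_add]
    congr 1
    push_cast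
    ring
  have hχne : χ ≠ 1 := by
    apply exp_ne_one_of_not_int
    rintro ⟨m, hm⟩
    exact hnt ⟨m, by field_simp [hM0] at hm; linarith⟩
  have : χ * ∑ y ∈ Y, f y = ∑ y ∈ Y, f y := by
    rw [Finset.mul_sum, ← step1]
    exact Finset.sum_congr rfl fun y _ => (hkey y).symm
  have h0 : (χ - 1) * ∑ y ∈ Y, f y = 0 := by rw [sub_mul, one_mul, this, sub_self]
  rcases mul_eq_zero.mp h0 with h | h
  · exact absurd (sub_eq_zero.mp h) hχne
  · exact h

section Helpers

variable {V : Type*} [NormedAddCommGroup V] [InnerProductSpace ℝ V]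

private lemma winv_apply (W : Subgroup (V ≃ₗᵢ[ℝ] V)) (w : W) (y : V) :
    (w : V ≃ₗᵢ[ℝ] V) (((w⁻¹ : W) : V ≃ₗᵢ[ℝ] V) y) = y := by
  have : ((w * w⁻¹ : W) : V ≃ₗᵢ[ℝ] V) y = y := by
    rw [mul_inv_cancel]; rfl
  simpa using this

private lemma inner_w_apply (W : Subgroup (V ≃ₗᵢ[ℝ] V)) (w : W) (x y : V) :
    (inner ℝ ((w : V ≃ₗᵢ[ℝ] V) x) y : ℝ) = inner ℝ x (((w⁻¹ : W) : V ≃ₗᵢ[ℝ] V) y) := by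
  conv_lhs => rw [← winv_apply W w y]
  exact (w : V ≃ₗᵢ[ℝ] V).inner_map_map x _

end Helpers

/-- the off-diagonal case of the discrete orthogonality of orbit
functions: in the situation of Statement 16, if `b - w·b' ∉ M·Q` for every `w ∈ W`,
then `Σ_{y ∈ Y} φ^σ_b(y) conj(φ^σ_{b'}(y)) = 0`. -/
theorem stmt_17 {V : Type*} [NormedAddCommGroup V] [InnerProductSpace ℝ V]
    [FiniteDimensional ℝ V]
    (W : Subgroup (V ≃ₗᵢ[ℝ] V)) [Fintype W] (σ : W →* ℤˣ) (M : ℕ) (hM : 1 ≤ M)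
    (Qv Pv : AddSubgroup V) (hQvPv : Qv ≤ Pv)
    (hQvW : ∀ w : W, ∀ q ∈ Qv, (w : V ≃ₗᵢ[ℝ] V) q ∈ Qv)
    (hPvW : ∀ w : W, ∀ p ∈ Pv, (w : V ≃ₗᵢ[ℝ] V) p ∈ Pv)
    (P : AddSubgroup V) (hdual : ∀ l ∈ P, ∀ q ∈ Qv, ∃ m : ℤ, (inner ℝ l q : ℝ) = m)
    (Q : Set V) (hQ : Q = {v : V | ∀ p ∈ Pv, ∃ m : ℤ, (inner ℝ v p : ℝ) = m})
    (ρ : V) (hρ : ∀ w : W, ρ - (w : V ≃ₗᵢ[ℝ] V) ρ ∈ P)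
    (ρv : V) (hρv : ∀ w : W, ρv - (w : V ≃ₗᵢ[ℝ] V) ρv ∈ Pv)
    (b b' : V) (hb : b - ρ ∈ P) (hb' : b' - ρ ∈ P)
    (Y : Finset V)
    (hY : Set.BijOn (fun y => (QuotientAddGroup.mk y : V ⧸ Qv)) ↑Y
      {x : V ⧸ Qv | ∃ v : V, (M : ℝ) • v - ρv ∈ Pv ∧ QuotientAddGroup.mk v = x})
    (hne : ∀ w : W, ¬ ∃ q ∈ Q, b - (w : V ≃ₗᵢ[ℝ] V) b' = (M : ℝ) • q) :
    ∑ y ∈ Y, orbitFn W σ b y * (starRingEnd ℂ) (orbitFn W σ b' y) = 0 := by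
  have hM0 : (M : ℝ) ≠ 0 := by positivity
  -- integrality of ⟨w x, q⟩ modulo ⟨ρ, q⟩ for x ∈ ρ + P, q ∈ Qv
  have hint1 : ∀ (w : W) (x : V), x - ρ ∈ P → ∀ q ∈ Qv,
      ∃ m : ℤ, (inner ℝ ((w : V ≃ₗᵢ[ℝ] V) x) q : ℝ) = inner ℝ ρ q + m := by
    intro w x hx q hq
    have hq' : ((w⁻¹ : W) : V ≃ₗᵢ[ℝ] V) q ∈ Qv := hQvW w⁻¹ q hq
    obtain ⟨m1, hm1⟩ := hdual _ hx _ hq'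
    obtain ⟨m2, hm2⟩ := hdual _ (hρ w) q hq
    refine ⟨m1 - m2, ?_⟩
    have e1 := inner_w_apply W w x q
    have e2 := inner_w_apply W w ρ q
    rw [inner_sub_left] at hm1 hm2
    push_cast
    linarith
  -- periodicity hypothesis for keysum
  have hcq : ∀ (w w' : W) (q : V), q ∈ Qv →
      ∃ m : ℤ, (inner ℝ ((w : V ≃ₗᵢ[ℝ] V) b - (w' : V ≃ₗᵢ[ℝ] V) b') q : ℝ) = m := by
    intro w w' q hq
    obtain ⟨m1, hm1⟩ := hint1 w b hb q hq
    obtain ⟨m2, hm2⟩ := hint1 w' b' hb' q hq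
    refine ⟨m1 - m2, ?_⟩
    rw [inner_sub_left]
    push_cast
    linarith
  -- nonintegrality hypothesis for keysum
  have hcp : ∀ (w w' : W), ∃ p ∈ Pv,
      ¬∃ m : ℤ, (inner ℝ ((w : V ≃ₗᵢ[ℝ] V) b - (w' : V ≃ₗᵢ[ℝ] V) b') p : ℝ) = M * m := by
    intro w w'
    by_contra h
    push_neg at h
    apply hne (w⁻¹ * w')
    set c : V := (w : V ≃ₗᵢ[ℝ] V) b - (w' : V ≃ₗᵢ[ℝ] V) b' with hc
    refine ⟨(M : ℝ)⁻¹ • (((w⁻¹ : W) : V ≃ₗᵢ[ℝ] V) c), ?_, ?_⟩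
    · rw [hQ]
      intro p hp
      have hp' : (w : V ≃ₗᵢ[ℝ] V) p ∈ Pv := hPvW w p hp
      obtain ⟨m, hm⟩ := h _ hp'
      refine ⟨m, ?_⟩
      rw [real_inner_smul_left]
      have e : (inner ℝ (((w⁻¹ : W) : V ≃ₗᵢ[ℝ] V) c) p : ℝ) = inner ℝ c ((w : V ≃ₗᵢ[ℝ] V) p) := by
        have := inner_w_apply W w⁻¹ c p
        rwa [inv_inv] at this
      rw [e, hm]
      field_simp
    · rw [smul_smul, mul_inv_cancel₀ hM0, one_smul, hc, map_sub]
      have e1 : ((w⁻¹ : W) : V ≃ₗᵢ[ℝ] V) ((w : V ≃ₗᵢ[ℝ] V) b) = b := by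
        have h2 := winv_apply W w⁻¹ b
        rwa [inv_inv] at h2
      rw [e1]
      rfl
  -- expand each term of the sum
  have hterm : ∀ (w w' : W) (y : V),
      (((σ w : ℤ) : ℂ) * Complex.exp (2 * Real.pi * Complex.I *
          ((inner ℝ ((w : V ≃ₗᵢ[ℝ] V) b) y : ℝ) : ℂ))) *
      (starRingEnd ℂ) (((σ w' : ℤ) : ℂ) * Complex.exp (2 * Real.pi * Complex.I *
          ((inner ℝ ((w' : V ≃ₗᵢ[ℝ] V) b') y : ℝ) : ℂ))) =
      ((σ w : ℤ) : ℂ) * ((σ w' : ℤ) : ℂ) * Complex.exp (2 * Real.pi * Complex.I *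
          ((inner ℝ ((w : V ≃ₗᵢ[ℝ] V) b - (w' : V ≃ₗᵢ[ℝ] V) b') y : ℝ) : ℂ)) := by
    intro w w' y
    rw [map_mul, ← Complex.exp_conj]
    have hconj : (starRingEnd ℂ) ((σ w' : ℤ) : ℂ) = ((σ w' : ℤ) : ℂ) :=
      map_intCast _ _
    have hconj2 : (starRingEnd ℂ) (2 * Real.pi * Complex.I *
        ((inner ℝ ((w' : V ≃ₗᵢ[ℝ] V) b') y : ℝ) : ℂ)) =
        -(2 * Real.pi * Complex.I * ((inner ℝ ((w' : V ≃ₗᵢ[ℝ] V) b') y : ℝ) : ℂ)) := by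
      simp only [map_mul, Complex.conj_I, Complex.conj_ofReal, map_ofNat]
      ring
    rw [hconj, hconj2]
    rw [show ∀ (A B : ℂ) (u v : ℂ), (A * Complex.exp u) * (B * Complex.exp v) =
      A * B * (Complex.exp u * Complex.exp v) from fun A B u v => by ring]
    rw [← Complex.exp_add]
    congr 1
    rw [inner_sub_left]
    push_cast
    ring
  calc ∑ y ∈ Y, orbitFn W σ b y * (starRingEnd ℂ) (orbitFn W σ b' y)
      = ∑ y ∈ Y, ∑ w : W, ∑ w' : W, ((σ w : ℤ) : ℂ) * ((σ w' : ℤ) : ℂ) *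
          Complex.exp (2 * Real.pi * Complex.I *
            ((inner ℝ ((w : V ≃ₗᵢ[ℝ] V) b - (w' : V ≃ₗᵢ[ℝ] V) b') y : ℝ) : ℂ)) := by
        refine Finset.sum_congr rfl fun y _ => ?_
        unfold orbitFn
        rw [map_sum, Finset.sum_mul_sum]
        exact Finset.sum_congr rfl fun w _ =>
          Finset.sum_congr rfl fun w' _ => hterm w w' y
    _ = ∑ w : W, ∑ w' : W, ((σ w : ℤ) : ℂ) * ((σ w' : ℤ) : ℂ) *
          ∑ y ∈ Y, Complex.exp (2 * Real.pi * Complex.I *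
            ((inner ℝ ((w : V ≃ₗᵢ[ℝ] V) b - (w' : V ≃ₗᵢ[ℝ] V) b') y : ℝ) : ℂ)) := by
        rw [Finset.sum_comm]
        refine Finset.sum_congr rfl fun w _ => ?_
        rw [Finset.sum_comm]
        refine Finset.sum_congr rfl fun w' _ => ?_
        rw [Finset.mul_sum]
    _ = 0 := by
        refine Finset.sum_eq_zero fun w _ => Finset.sum_eq_zero fun w' _ => ?_
        obtain ⟨p, hp, hnt⟩ := hcp w w'
        rw [keysum Qv Pv M hM ρv Y hY _ (fun q hq => hcq w w' q hq) p hp hnt, mul_zero]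
end
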